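/- arXiv:1202.4144 — 8 statements merged into one kernel-verified Lean document; each statement's English description precedes it below -/
import Mathlib

section
/- (Hintikka's Lemma for C1) Every C1 downward saturated set of signed formulas is satisfiable, i.e., there exists a C1-valuation v such that v(S A) = 1 for every signed formula S A in the set. -/
/-- Formulas of the paraconsistent logic C1, built from propositional atoms
with the connectives ¬, ∧, ∨, →. -/
inductive C1Formula : Type
  | atom : ℕ → C1Formula
  | neg  : C1Formula → C1Formula
  | and  : C1Formula → C1Formula → C1Formula
  | or   : C1Formula → C1Formula → C1Formula
  | imp  : C1Formula → C1Formula → C1Formula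
  deriving DecidableEq

namespace C1Formula

/-- The consistency connective: ∘A := ¬(A ∧ ¬A). -/
def cons (A : C1Formula) : C1Formula := neg (and A (neg A))

end C1Formula

/-- A C1 bivaluation: a function from formulas to {0,1} satisfying
da Costa's valuation clauses for C1. -/
structure C1Valuation : Type where
  v : C1Formula → Fin 2
  and_iff : ∀ A B : C1Formula, v (A.and B) = 1 ↔ (v A = 1 ∧ v B = 1)
  or_iff  : ∀ A B : C1Formula, v (A.or B) = 1 ↔ (v A = 1 ∨ v B = 1)
  imp_iff : ∀ A B : C1Formula, v (A.imp B) = 1 ↔ (v A = 0 ∨ v B = 1)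
  neg_val : ∀ A : C1Formula, v A.neg = 0 → v A = 1
  negneg_val : ∀ A : C1Formula, v A.neg.neg = 1 → v A = 1
  cons_val : ∀ A : C1Formula, v A.cons = 1 → (v A = 0 ∨ v A.neg = 0)
  cons_and : ∀ A B : C1Formula, v (A.and B).cons = 0 → (v A.cons = 0 ∨ v B.cons = 0)
  cons_or  : ∀ A B : C1Formula, v (A.or B).cons = 0 → (v A.cons = 0 ∨ v B.cons = 0)
  cons_imp : ∀ A B : C1Formula, v (A.imp B).cons = 0 → (v A.cons = 0 ∨ v B.cons = 0)

/-- Γ ⊨_{C1} B : every C1-valuation assigning 1 to all members of Γ assigns 1 to B. -/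
def C1Valid (Γ : Set C1Formula) (B : C1Formula) : Prop :=
  ∀ w : C1Valuation, (∀ A ∈ Γ, w.v A = 1) → w.v B = 1
/-- Signed formulas: T A or F A. -/
inductive SignedFormula : Type
  | T : C1Formula → SignedFormula
  | F : C1Formula → SignedFormula
  deriving DecidableEq

namespace SignedFormula

/-- The conjugate of a signed formula: the conjugate of T A is F A and vice versa. -/
def conj : SignedFormula → SignedFormula
  | T A => F A
  | F A => T A

end SignedFormula

open SignedFormula

/-- Extension of a C1-valuation to signed formulas: v(T A) = v(A), v(F A) = 1 - v(A). -/
def C1Valuation.sv (w : C1Valuation) : SignedFormula → Fin 2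
  | .T A => w.v A
  | .F A => 1 - w.v A

/-- A set of signed formulas is satisfiable if some C1-valuation assigns 1 to all its members. -/
def SatSet (S : Set SignedFormula) : Prop :=
  ∃ w : C1Valuation, ∀ sf ∈ S, w.sv sf = 1

/-- A set DS of signed formulas is downward saturated for the C1 KE system:
(i) no signed formula together with its conjugate;
(ii) closure under all linear C1 KE rules;
(iii) whenever the major premiss of a 2-premiss rule is in DS, the minor premiss
or its conjugate is in DS. -/
structure DownwardSaturated (DS : Set SignedFormula) : Prop where
  no_conj : ∀ sf ∈ DS, sf.conj ∉ DS
  -- (ii) 1-premiss rules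
  f_imp : ∀ A B : C1Formula, F (A.imp B) ∈ DS → T A ∈ DS ∧ F B ∈ DS
  t_and : ∀ A B : C1Formula, T (A.and B) ∈ DS → T A ∈ DS ∧ T B ∈ DS
  f_or  : ∀ A B : C1Formula, F (A.or B) ∈ DS → F A ∈ DS ∧ F B ∈ DS
  f_neg : ∀ A : C1Formula, F A.neg ∈ DS → T A ∈ DS
  t_negneg : ∀ A : C1Formula, T A.neg.neg ∈ DS → T A ∈ DS
  -- (ii) 2-premiss rules
  t_imp1 : ∀ A B : C1Formula, T (A.imp B) ∈ DS → T A ∈ DS → T B ∈ DS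
  t_imp2 : ∀ A B : C1Formula, T (A.imp B) ∈ DS → F B ∈ DS → F A ∈ DS
  f_and1 : ∀ A B : C1Formula, F (A.and B) ∈ DS → T A ∈ DS → F B ∈ DS
  f_and2 : ∀ A B : C1Formula, F (A.and B) ∈ DS → T B ∈ DS → F A ∈ DS
  t_or1  : ∀ A B : C1Formula, T (A.or B) ∈ DS → F A ∈ DS → T B ∈ DS
  t_or2  : ∀ A B : C1Formula, T (A.or B) ∈ DS → F B ∈ DS → T A ∈ DS
  t_neg  : ∀ A : C1Formula, T A.neg ∈ DS → T A.cons ∈ DS → F A ∈ DS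
  f_cons_and1 : ∀ A B : C1Formula, F (A.and B).cons ∈ DS → T A.cons ∈ DS → F B.cons ∈ DS
  f_cons_and2 : ∀ A B : C1Formula, F (A.and B).cons ∈ DS → T B.cons ∈ DS → F A.cons ∈ DS
  f_cons_or1  : ∀ A B : C1Formula, F (A.or B).cons ∈ DS → T A.cons ∈ DS → F B.cons ∈ DS
  f_cons_or2  : ∀ A B : C1Formula, F (A.or B).cons ∈ DS → T B.cons ∈ DS → F A.cons ∈ DS
  f_cons_imp1 : ∀ A B : C1Formula, F (A.imp B).cons ∈ DS → T A.cons ∈ DS → F B.cons ∈ DS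
  f_cons_imp2 : ∀ A B : C1Formula, F (A.imp B).cons ∈ DS → T B.cons ∈ DS → F A.cons ∈ DS
  -- (iii) minor premiss or its conjugate present whenever the major premiss is
  t_imp1_minor : ∀ A B : C1Formula, T (A.imp B) ∈ DS → (T A ∈ DS ∨ F A ∈ DS)
  t_imp2_minor : ∀ A B : C1Formula, T (A.imp B) ∈ DS → (F B ∈ DS ∨ T B ∈ DS)
  f_and1_minor : ∀ A B : C1Formula, F (A.and B) ∈ DS → (T A ∈ DS ∨ F A ∈ DS)
  f_and2_minor : ∀ A B : C1Formula, F (A.and B) ∈ DS → (T B ∈ DS ∨ F B ∈ DS)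
  t_or1_minor  : ∀ A B : C1Formula, T (A.or B) ∈ DS → (F A ∈ DS ∨ T A ∈ DS)
  t_or2_minor  : ∀ A B : C1Formula, T (A.or B) ∈ DS → (F B ∈ DS ∨ T B ∈ DS)
  t_neg_minor  : ∀ A : C1Formula, T A.neg ∈ DS → (T A.cons ∈ DS ∨ F A.cons ∈ DS)
  f_cons_and1_minor : ∀ A B : C1Formula, F (A.and B).cons ∈ DS → (T A.cons ∈ DS ∨ F A.cons ∈ DS)
  f_cons_and2_minor : ∀ A B : C1Formula, F (A.and B).cons ∈ DS → (T B.cons ∈ DS ∨ F B.cons ∈ DS)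
  f_cons_or1_minor  : ∀ A B : C1Formula, F (A.or B).cons ∈ DS → (T A.cons ∈ DS ∨ F A.cons ∈ DS)
  f_cons_or2_minor  : ∀ A B : C1Formula, F (A.or B).cons ∈ DS → (T B.cons ∈ DS ∨ F B.cons ∈ DS)
  f_cons_imp1_minor : ∀ A B : C1Formula, F (A.imp B).cons ∈ DS → (T A.cons ∈ DS ∨ F A.cons ∈ DS)
  f_cons_imp2_minor : ∀ A B : C1Formula, F (A.imp B).cons ∈ DS → (T B.cons ∈ DS ∨ F B.cons ∈ DS)

namespace C1Hintikka

open SignedFormula Classical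

/-- size of a formula -/
def sz : C1Formula → ℕ
  | .atom _ => 1
  | .neg A => sz A + 1
  | .and A B => sz A + sz B + 1
  | .or A B => sz A + sz B + 1
  | .imp A B => sz A + sz B + 1

lemma sz_pos (A : C1Formula) : 1 ≤ sz A := by
  cases A <;> simp [sz]

open Classical in
/-- The canonical valuation induced by a set of signed formulas. -/
noncomputable def val (DS : Set SignedFormula) : C1Formula → Fin 2
  | .atom n => if F (.atom n) ∈ DS then 0 else 1
  | .and A B => if val DS A = 1 ∧ val DS B = 1 then 1 else 0
  | .or A B => if val DS A = 1 ∨ val DS B = 1 then 1 else 0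
  | .imp A B => if val DS A = 0 ∨ val DS B = 1 then 1 else 0
  | .neg (.atom n) =>
      if val DS (.atom n) = 1 ∧ (F (C1Formula.neg (.atom n)) ∈ DS ∨ False) then 0 else 1
  | .neg (.neg B) =>
      if val DS (.neg B) = 1 ∧ (F (C1Formula.neg (.neg B)) ∈ DS ∨ val DS B = 0) then 0 else 1
  | .neg (.and B C) =>
      if val DS (.and B C) = 1 ∧ (F (C1Formula.neg (.and B C)) ∈ DS ∨
        ((¬(val DS B = 1 ∧ val DS (.neg B) = 1) ∧ ¬(val DS C = 1 ∧ val DS (.neg C) = 1)) ∨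
         (C = .neg B ∧ val DS B = 1 ∧ val DS (.neg B) = 1))) then 0 else 1
  | .neg (.or B C) =>
      if val DS (.or B C) = 1 ∧ (F (C1Formula.neg (.or B C)) ∈ DS ∨
        (¬(val DS B = 1 ∧ val DS (.neg B) = 1) ∧ ¬(val DS C = 1 ∧ val DS (.neg C) = 1)))
      then 0 else 1
  | .neg (.imp B C) =>
      if val DS (.imp B C) = 1 ∧ (F (C1Formula.neg (.imp B C)) ∈ DS ∨
        (¬(val DS B = 1 ∧ val DS (.neg B) = 1) ∧ ¬(val DS C = 1 ∧ val DS (.neg C) = 1)))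
      then 0 else 1
termination_by A => sz A
decreasing_by
  all_goals simp [sz]
  all_goals first
    | omega
    | (have := sz_pos B; have := sz_pos C; omega)

variable (DS : Set SignedFormula)

open Classical in
/-- The condition forcing a negation to be false. -/
def Z : C1Formula → Prop
  | .atom n => F (C1Formula.neg (.atom n)) ∈ DS ∨ False
  | .neg B => F (C1Formula.neg (.neg B)) ∈ DS ∨ val DS B = 0
  | .and B C => F (C1Formula.neg (.and B C)) ∈ DS ∨
      ((¬(val DS B = 1 ∧ val DS (.neg B) = 1) ∧ ¬(val DS C = 1 ∧ val DS (.neg C) = 1)) ∨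
       (C = .neg B ∧ val DS B = 1 ∧ val DS (.neg B) = 1))
  | .or B C => F (C1Formula.neg (.or B C)) ∈ DS ∨
      (¬(val DS B = 1 ∧ val DS (.neg B) = 1) ∧ ¬(val DS C = 1 ∧ val DS (.neg C) = 1))
  | .imp B C => F (C1Formula.neg (.imp B C)) ∈ DS ∨
      (¬(val DS B = 1 ∧ val DS (.neg B) = 1) ∧ ¬(val DS C = 1 ∧ val DS (.neg C) = 1))

open Classical in
lemma val_neg (A : C1Formula) :
    val DS A.neg = if val DS A = 1 ∧ Z DS A then 0 else 1 := by
  cases A <;> simp only [val, Z] <;> (split <;> rename_i hc <;> simp only [hc, true_and, and_true, ite_true, ite_false])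

lemma fin2 (x : Fin 2) : x = 0 ∨ x = 1 := by omega

lemma val_and_iff (A B : C1Formula) :
    val DS (A.and B) = 1 ↔ (val DS A = 1 ∧ val DS B = 1) := by
  rw [val]; split <;> simp_all

lemma val_or_iff (A B : C1Formula) :
    val DS (A.or B) = 1 ↔ (val DS A = 1 ∨ val DS B = 1) := by
  rw [val]; split <;> simp_all

lemma val_imp_iff (A B : C1Formula) :
    val DS (A.imp B) = 1 ↔ (val DS A = 0 ∨ val DS B = 1) := by
  rw [val]; split <;> simp_all

lemma val_neg_eq_zero_iff (A : C1Formula) :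
    val DS A.neg = 0 ↔ (val DS A = 1 ∧ Z DS A) := by
  rw [val_neg]; split <;> simp_all

lemma val_neg_eq_one_iff (A : C1Formula) :
    val DS A.neg = 1 ↔ ¬(val DS A = 1 ∧ Z DS A) := by
  rw [val_neg]; split <;> simp_all

/-- If A and ¬A are both true, then ∘A is false. -/
lemma val_cons_zero (A : C1Formula) (h1 : val DS A = 1) (h2 : val DS A.neg = 1) :
    val DS A.cons = 0 := by
  show val DS (C1Formula.neg (C1Formula.and A A.neg)) = 0
  rw [val_neg_eq_zero_iff]
  constructor
  · rw [val_and_iff]; exact ⟨h1, h2⟩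
  · right; right; exact ⟨rfl, h1, h2⟩

lemma ne_one (x : Fin 2) : x = 0 ↔ ¬x = 1 := by omega

lemma Z_of_mem (A : C1Formula) (hF : F A.neg ∈ DS) : Z DS A := by
  cases A <;> exact Or.inl hF

lemma helperFcons (h : DownwardSaturated DS) {Y : C1Formula} (hY : F Y.cons ∈ DS) :
    T Y ∈ DS ∧ T Y.neg ∈ DS :=
  h.t_and _ _ (h.f_neg _ hY)

/-- The generic argument for a binary connective. -/
lemma gen_case (h : DownwardSaturated DS) (A B C : C1Formula)
    (hT : T A.neg ∈ DS) (hA1 : val DS A = 1)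
    (minor : F A.cons ∈ DS → (T B.cons ∈ DS ∨ F B.cons ∈ DS))
    (rule : F A.cons ∈ DS → T B.cons ∈ DS → F C.cons ∈ DS)
    (hvB : ¬(val DS B = 1 ∧ val DS B.neg = 1))
    (hvC : ¬(val DS C = 1 ∧ val DS C.neg = 1))
    (ihA : F A ∈ DS → val DS A = 0)
    (ihB : T B ∈ DS → val DS B = 1) (ihnB : T B.neg ∈ DS → val DS B.neg = 1)
    (ihC : T C ∈ DS → val DS C = 1) (ihnC : T C.neg ∈ DS → val DS C.neg = 1) : False := by
  rcases h.t_neg_minor A hT with hTc | hFc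
  · have := ihA (h.t_neg A hT hTc); omega
  · rcases minor hFc with hTB | hFB
    · obtain ⟨h1, h2⟩ := helperFcons DS h (rule hFc hTB)
      exact hvC ⟨ihC h1, ihnC h2⟩
    · obtain ⟨h1, h2⟩ := helperFcons DS h hFB
      exact hvB ⟨ihB h1, ihnB h2⟩

lemma mem_val (h : DownwardSaturated DS) :
    ∀ n X, sz X < n → (T X ∈ DS → val DS X = 1) ∧ (F X ∈ DS → val DS X = 0) := by
  intro n
  induction n with
  | zero => intro X hX; exact absurd hX (by omega)
  | succ n ih =>
    intro X hX
    cases X with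
    | atom a =>
      constructor
      · intro hT
        have hnF : F (C1Formula.atom a) ∉ DS := h.no_conj _ hT
        rw [val, if_neg hnF]
      · intro hF; rw [val, if_pos hF]
    | and A B =>
      have ihA := ih A (by simp [sz] at hX ⊢; omega)
      have ihB := ih B (by simp [sz] at hX ⊢; omega)
      constructor
      · intro hT
        obtain ⟨h1, h2⟩ := h.t_and A B hT
        rw [val, if_pos ⟨ihA.1 h1, ihB.1 h2⟩]
      · intro hF
        rw [ne_one, val_and_iff]
        rintro ⟨hA1, hB1⟩
        rcases h.f_and1_minor A B hF with hTA | hFA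
        · have := ihB.2 (h.f_and1 A B hF hTA); omega
        · have := ihA.2 hFA; omega
    | or A B =>
      have ihA := ih A (by simp [sz] at hX ⊢; omega)
      have ihB := ih B (by simp [sz] at hX ⊢; omega)
      constructor
      · intro hT
        rw [val_or_iff]
        rcases h.t_or1_minor A B hT with hFA | hTA
        · exact Or.inr (ihB.1 (h.t_or1 A B hT hFA))
        · exact Or.inl (ihA.1 hTA)
      · intro hF
        obtain ⟨h1, h2⟩ := h.f_or A B hF
        rw [ne_one, val_or_iff]
        have := ihA.2 h1; have := ihB.2 h2
        rintro (h3 | h3) <;> omega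
    | imp A B =>
      have ihA := ih A (by simp [sz] at hX ⊢; omega)
      have ihB := ih B (by simp [sz] at hX ⊢; omega)
      constructor
      · intro hT
        rw [val_imp_iff]
        rcases h.t_imp1_minor A B hT with hTA | hFA
        · exact Or.inr (ihB.1 (h.t_imp1 A B hT hTA))
        · exact Or.inl (ihA.2 hFA)
      · intro hF
        obtain ⟨h1, h2⟩ := h.f_imp A B hF
        rw [ne_one, val_imp_iff]
        have := ihA.1 h1; have := ihB.2 h2
        rintro (h3 | h3) <;> omega
    | neg A =>
      have ihA := ih A (by simp [sz] at hX ⊢; omega)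
      constructor
      · intro hT
        rw [val_neg_eq_one_iff]
        rintro ⟨hA1, hZ⟩
        cases A with
        | atom a =>
          rcases hZ with hF | hfalse
          · exact h.no_conj _ hT hF
          · exact hfalse
        | neg B =>
          have ihB := ih B (by simp [sz] at hX ⊢; omega)
          rcases hZ with hF | hB0
          · exact h.no_conj _ hT hF
          · have := ihB.1 (h.t_negneg B hT); omega
        | and B C =>
          have ihB := ih B (by simp [sz] at hX ⊢; omega)
          have ihC := ih C (by simp [sz] at hX ⊢; omega)
          have ihnB := ih B.neg (by simp [sz] at hX ⊢; omega)
          have ihnC := ih C.neg (by simp [sz] at hX ⊢; omega)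
          rcases hZ with hF | hcc | ⟨rfl, hB1, hnB1⟩
          · exact h.no_conj _ hT hF
          · exact gen_case DS h (B.and C) B C hT hA1 (h.f_cons_and1_minor B C)
              (h.f_cons_and1 B C) hcc.1 hcc.2 ihA.2 ihB.1 ihnB.1 ihC.1 ihnC.1
          · -- A = B ∧ ¬B : hT is T ∘B ∈ DS
            rcases h.t_neg_minor (B.and B.neg) hT with hTc | hFc
            · have hFA := h.t_neg _ hT hTc
              rcases h.f_and1_minor B B.neg hFA with hTB | hFB
              · have := ihnB.2 (h.f_and1 B B.neg hFA hTB); omega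
              · have := ihB.2 hFB; omega
            · rcases h.f_cons_and1_minor B B.neg hFc with hTBc | hFBc
              · have hFnBc := h.f_cons_and1 B B.neg hFc hTBc
                obtain ⟨h1, h2⟩ := helperFcons DS h hFnBc
                have hTB := h.t_negneg B h2
                have hFB := h.t_neg B h1 hT
                exact h.no_conj _ hTB hFB
              · exact h.no_conj _ hT hFBc
        | or B C =>
          have ihB := ih B (by simp [sz] at hX ⊢; omega)
          have ihC := ih C (by simp [sz] at hX ⊢; omega)
          have ihnB := ih B.neg (by simp [sz] at hX ⊢; omega)
          have ihnC := ih C.neg (by simp [sz] at hX ⊢; omega)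
          rcases hZ with hF | hcc
          · exact h.no_conj _ hT hF
          · exact gen_case DS h (B.or C) B C hT hA1 (h.f_cons_or1_minor B C)
              (h.f_cons_or1 B C) hcc.1 hcc.2 ihA.2 ihB.1 ihnB.1 ihC.1 ihnC.1
        | imp B C =>
          have ihB := ih B (by simp [sz] at hX ⊢; omega)
          have ihC := ih C (by simp [sz] at hX ⊢; omega)
          have ihnB := ih B.neg (by simp [sz] at hX ⊢; omega)
          have ihnC := ih C.neg (by simp [sz] at hX ⊢; omega)
          rcases hZ with hF | hcc
          · exact h.no_conj _ hT hF
          · exact gen_case DS h (B.imp C) B C hT hA1 (h.f_cons_imp1_minor B C)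
              (h.f_cons_imp1 B C) hcc.1 hcc.2 ihA.2 ihB.1 ihnB.1 ihC.1 ihnC.1
      · intro hF
        rw [val_neg_eq_zero_iff]
        exact ⟨ihA.1 (h.f_neg A hF), Z_of_mem DS A hF⟩

end C1Hintikka

/-- Hintikka's Lemma for C1: every C1 downward saturated set of signed
formulas is satisfiable. -/
theorem c1_hintikka_lemma (DS : Set SignedFormula) (h : DownwardSaturated DS) :
    SatSet DS := by
  open C1Hintikka in
  refine ⟨⟨val DS, val_and_iff DS, val_or_iff DS, val_imp_iff DS, ?_, ?_, ?_, ?_, ?_, ?_⟩, ?_⟩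
  · -- neg_val
    intro A hA0
    exact ((val_neg_eq_zero_iff DS A).1 hA0).1
  · -- negneg_val
    intro A h1
    by_contra hne
    have hA0 : val DS A = 0 := by omega
    have hnA : val DS A.neg = 1 := by
      rw [val_neg_eq_one_iff]; rintro ⟨hx, -⟩; omega
    have : val DS A.neg.neg = 0 := by
      rw [val_neg_eq_zero_iff]; exact ⟨hnA, Or.inr hA0⟩
    omega
  · -- cons_val
    intro A h1
    by_contra hn
    push_neg at hn
    obtain ⟨hA, hnA⟩ := hn
    have hA1 : val DS A = 1 := by omega
    have hnA1 : val DS A.neg = 1 := by omega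
    have := val_cons_zero DS A hA1 hnA1
    omega
  · -- cons_and
    intro A B h0
    rw [show (A.and B).cons = ((A.and B).and (A.and B).neg).neg from rfl,
      val_neg_eq_zero_iff] at h0
    obtain ⟨hC1, hZ⟩ := h0
    rw [val_and_iff] at hC1
    obtain ⟨hC, hnC⟩ := hC1
    rw [val_neg_eq_one_iff] at hnC
    have hZC : ¬ Z DS (A.and B) := fun hz => hnC ⟨hC, hz⟩
    have hcc : ¬(¬(val DS A = 1 ∧ val DS A.neg = 1) ∧ ¬(val DS B = 1 ∧ val DS B.neg = 1)) :=
      fun hcc => hZC (Or.inr (Or.inl hcc))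
    rcases not_and_or.mp hcc with hA | hB
    · rw [not_not] at hA; exact Or.inl (val_cons_zero DS A hA.1 hA.2)
    · rw [not_not] at hB; exact Or.inr (val_cons_zero DS B hB.1 hB.2)
  · -- cons_or
    intro A B h0
    rw [show (A.or B).cons = ((A.or B).and (A.or B).neg).neg from rfl,
      val_neg_eq_zero_iff] at h0
    obtain ⟨hC1, hZ⟩ := h0
    rw [val_and_iff] at hC1
    obtain ⟨hC, hnC⟩ := hC1
    rw [val_neg_eq_one_iff] at hnC
    have hZC : ¬ Z DS (A.or B) := fun hz => hnC ⟨hC, hz⟩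
    have hcc : ¬(¬(val DS A = 1 ∧ val DS A.neg = 1) ∧ ¬(val DS B = 1 ∧ val DS B.neg = 1)) :=
      fun hcc => hZC (Or.inr hcc)
    rcases not_and_or.mp hcc with hA | hB
    · rw [not_not] at hA; exact Or.inl (val_cons_zero DS A hA.1 hA.2)
    · rw [not_not] at hB; exact Or.inr (val_cons_zero DS B hB.1 hB.2)
  · -- cons_imp
    intro A B h0
    rw [show (A.imp B).cons = ((A.imp B).and (A.imp B).neg).neg from rfl,
      val_neg_eq_zero_iff] at h0
    obtain ⟨hC1, hZ⟩ := h0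
    rw [val_and_iff] at hC1
    obtain ⟨hC, hnC⟩ := hC1
    rw [val_neg_eq_one_iff] at hnC
    have hZC : ¬ Z DS (A.imp B) := fun hz => hnC ⟨hC, hz⟩
    have hcc : ¬(¬(val DS A = 1 ∧ val DS A.neg = 1) ∧ ¬(val DS B = 1 ∧ val DS B.neg = 1)) :=
      fun hcc => hZC (Or.inr hcc)
    rcases not_and_or.mp hcc with hA | hB
    · rw [not_not] at hA; exact Or.inl (val_cons_zero DS A hA.1 hA.2)
    · rw [not_not] at hB; exact Or.inr (val_cons_zero DS B hB.1 hB.2)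
  · -- satisfaction of DS
    intro sf hsf
    cases sf with
    | T A => exact (mem_val DS h (sz A + 1) A (by omega)).1 hsf
    | F A =>
      have := (mem_val DS h (sz A + 1) A (by omega)).2 hsf
      show 1 - val DS A = 1
      rw [this]; rfl
end

section
/- Let DS' be a set of signed formulas of C1. Then DS' is satisfiable if and only if there exists a C1 downward saturated set DS'' such that DS' ⊆ DS''. -/
open SignedFormula

namespace C1KE

attribute [local instance] Classical.propDecidable

lemma fin2 (x : Fin 2) : x = 0 ∨ x = 1 := by omega
lemma fin2_ne1 {x : Fin 2} (h : ¬ x = 1) : x = 0 := by omega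
lemma fin2_ne0 {x : Fin 2} (h : ¬ x = 0) : x = 1 := by omega
@[simp] lemma fin2_01 : ((0 : Fin 2) = 1) ↔ False := by decide
@[simp] lemma fin2_10 : ((1 : Fin 2) = 0) ↔ False := by decide

/-- size of a formula -/
def fsize : C1Formula → ℕ
  | .atom _ => 1
  | .neg A => fsize A + 1
  | .and A B => fsize A + fsize B + 1
  | .or A B => fsize A + fsize B + 1
  | .imp A B => fsize A + fsize B + 1

lemma fsize_pos (A : C1Formula) : 1 ≤ fsize A := by
  cases A <;> simp [fsize]

/-- The valuation extracted from a set of signed formulas. -/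
noncomputable def val (DS : Set SignedFormula) : C1Formula → Fin 2
  | .atom n => if SignedFormula.F (.atom n) ∈ DS then 0 else 1
  | .and A B => if val DS A = 1 ∧ val DS B = 1 then 1 else 0
  | .or A B => if val DS A = 1 ∨ val DS B = 1 then 1 else 0
  | .imp A B => if val DS A = 0 ∨ val DS B = 1 then 1 else 0
  | .neg (.atom n) =>
      if val DS (C1Formula.atom n) = 0 then 1
      else if SignedFormula.F (C1Formula.neg (.atom n)) ∈ DS then 0 else 1
  | .neg (.neg D) =>
      if val DS (C1Formula.neg D) = 0 then 1
      else if val DS D = 0 then 0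
      else if SignedFormula.F (C1Formula.neg (.neg D)) ∈ DS then 0 else 1
  | .neg (.and X Y) =>
      if val DS (C1Formula.and X Y) = 0 then 1
      else if Y = C1Formula.neg X ∨
          (¬(val DS X = 1 ∧ val DS (C1Formula.neg X) = 1) ∧
           ¬(val DS Y = 1 ∧ val DS (C1Formula.neg Y) = 1)) then 0
      else if SignedFormula.F (C1Formula.neg (.and X Y)) ∈ DS then 0 else 1
  | .neg (.or X Y) =>
      if val DS (C1Formula.or X Y) = 0 then 1
      else if (¬(val DS X = 1 ∧ val DS (C1Formula.neg X) = 1) ∧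
           ¬(val DS Y = 1 ∧ val DS (C1Formula.neg Y) = 1)) then 0
      else if SignedFormula.F (C1Formula.neg (.or X Y)) ∈ DS then 0 else 1
  | .neg (.imp X Y) =>
      if val DS (C1Formula.imp X Y) = 0 then 1
      else if (¬(val DS X = 1 ∧ val DS (C1Formula.neg X) = 1) ∧
           ¬(val DS Y = 1 ∧ val DS (C1Formula.neg Y) = 1)) then 0
      else if SignedFormula.F (C1Formula.neg (.imp X Y)) ∈ DS then 0 else 1
  termination_by A => sizeOf A
  decreasing_by all_goals (simp_wf; try omega)

lemma val_and (DS : Set SignedFormula) (A B : C1Formula) :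
    val DS (A.and B) = if val DS A = 1 ∧ val DS B = 1 then 1 else 0 := by rw [val]
lemma val_or (DS : Set SignedFormula) (A B : C1Formula) :
    val DS (A.or B) = if val DS A = 1 ∨ val DS B = 1 then 1 else 0 := by rw [val]
lemma val_imp (DS : Set SignedFormula) (A B : C1Formula) :
    val DS (A.imp B) = if val DS A = 0 ∨ val DS B = 1 then 1 else 0 := by rw [val]
lemma val_atom (DS : Set SignedFormula) (n : ℕ) :
    val DS (C1Formula.atom n) = if SignedFormula.F (.atom n) ∈ DS then 0 else 1 := by rw [val]

lemma val_neg_pos {DS : Set SignedFormula} {A : C1Formula} (h : val DS A = 0) :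
    val DS A.neg = 1 := by
  cases A <;> rw [val] <;> rw [if_pos h]

lemma val_neg_ne0 {DS : Set SignedFormula} {A : C1Formula} (h : val DS A.neg = 0) :
    val DS A = 1 := by
  by_contra hc
  have h0 := fin2_ne1 hc
  have := val_neg_pos h0
  omega

lemma val_negneg {DS : Set SignedFormula} {A : C1Formula} (h1 : val DS A.neg.neg = 1) :
    val DS A = 1 := by
  by_contra hc
  have h0 : val DS A = 0 := fin2_ne1 hc
  have hn : val DS A.neg = 1 := val_neg_pos h0
  rw [val, if_neg (by simp [hn]), if_pos h0] at h1
  simp at h1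

lemma val_cons (DS : Set SignedFormula) (A : C1Formula) :
    val DS A.cons = 1 ↔ ¬(val DS A = 1 ∧ val DS A.neg = 1) := by
  show val DS (C1Formula.neg (C1Formula.and A (C1Formula.neg A))) = 1 ↔ _
  by_cases h0 : val DS (A.and A.neg) = 0
  · rw [val, if_pos h0]
    refine ⟨fun _ hc => ?_, fun _ => rfl⟩
    rw [val_and, if_pos hc] at h0
    simp at h0
  · have hc : val DS A = 1 ∧ val DS A.neg = 1 := by
      have h1 : val DS (A.and A.neg) = 1 := fin2_ne0 h0
      rw [val_and] at h1
      by_contra hcc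
      rw [if_neg hcc] at h1
      simp at h1
    rw [val, if_neg h0, if_pos (Or.inl rfl)]
    simp [hc.1, hc.2]

lemma val_cons0 (DS : Set SignedFormula) (A : C1Formula) :
    val DS A.cons = 0 ↔ (val DS A = 1 ∧ val DS A.neg = 1) := by
  have h := val_cons DS A
  constructor
  · intro h0
    by_contra hc
    have := h.mpr hc
    omega
  · intro hc
    exact fin2_ne1 (fun h1 => (h.mp h1) hc)

/-- The extracted valuation is a genuine C1 valuation. -/
noncomputable def mkVal (DS : Set SignedFormula) : C1Valuation where
  v := val DS
  and_iff A B := by rw [val_and]; split <;> simp_all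
  or_iff A B := by rw [val_or]; split <;> simp_all
  imp_iff A B := by rw [val_imp]; split <;> simp_all
  neg_val A h := val_neg_ne0 h
  negneg_val A h := val_negneg h
  cons_val A h := by
    have hc := (val_cons DS A).mp h
    rcases fin2 (val DS A) with h1 | h1
    · exact Or.inl h1
    rcases fin2 (val DS A.neg) with h2 | h2
    · exact Or.inr h2
    exact absurd ⟨h1, h2⟩ hc
  cons_and A B h0 := by
    obtain ⟨h1, h2⟩ := (val_cons0 DS (A.and B)).mp h0
    by_contra hc
    push_neg at hc
    obtain ⟨hA, hB⟩ := hc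
    have hA1 := (val_cons DS A).mp (fin2_ne0 hA)
    have hB1 := (val_cons DS B).mp (fin2_ne0 hB)
    rw [val, if_neg (by simp [h1]), if_pos (Or.inr ⟨hA1, hB1⟩)] at h2
    simp at h2
  cons_or A B h0 := by
    obtain ⟨h1, h2⟩ := (val_cons0 DS (A.or B)).mp h0
    by_contra hc
    push_neg at hc
    obtain ⟨hA, hB⟩ := hc
    have hA1 := (val_cons DS A).mp (fin2_ne0 hA)
    have hB1 := (val_cons DS B).mp (fin2_ne0 hB)
    rw [val, if_neg (by simp [h1]), if_pos ⟨hA1, hB1⟩] at h2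
    simp at h2
  cons_imp A B h0 := by
    obtain ⟨h1, h2⟩ := (val_cons0 DS (A.imp B)).mp h0
    by_contra hc
    push_neg at hc
    obtain ⟨hA, hB⟩ := hc
    have hA1 := (val_cons DS A).mp (fin2_ne0 hA)
    have hB1 := (val_cons DS B).mp (fin2_ne0 hB)
    rw [val, if_neg (by simp [h1]), if_pos ⟨hA1, hB1⟩] at h2
    simp at h2

end C1KE
namespace C1KE

lemma sat_forward (w : C1Valuation) : DownwardSaturated {sf | w.sv sf = 1} := by
  have hT : ∀ A : C1Formula, (SignedFormula.T A ∈ {sf | w.sv sf = 1}) ↔ w.v A = 1 :=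
    fun A => Iff.rfl
  have hF : ∀ A : C1Formula, (SignedFormula.F A ∈ {sf | w.sv sf = 1}) ↔ w.v A = 0 := by
    intro A
    show (1 - w.v A = 1) ↔ _
    rcases fin2 (w.v A) with h | h <;> rw [h] <;> decide
  refine ⟨?_, ?_, ?_, ?_, ?_, ?_, ?_, ?_, ?_, ?_, ?_, ?_, ?_, ?_, ?_, ?_, ?_, ?_, ?_,
    ?_, ?_, ?_, ?_, ?_, ?_, ?_, ?_, ?_, ?_, ?_, ?_, ?_⟩
  -- no_conj
  · intro sf hsf hc
    cases sf with
    | T A =>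
      have h1 : w.v A = 1 := hsf
      have h2 := (hF A).mp hc
      omega
    | F A =>
      have h1 := (hF A).mp hsf
      have h2 : w.v A = 1 := hc
      omega
  -- f_imp
  · intro A B hm
    have h1 := (hF _).mp hm
    have hi := w.imp_iff A B
    simp only [hT, hF]
    rcases fin2 (w.v A) with ha | ha <;> rcases fin2 (w.v B) with hb | hb <;> simp_all
  -- t_and
  · intro A B hm
    have h1 : w.v (A.and B) = 1 := hm
    have := (w.and_iff A B).mp h1
    simp only [hT]
    exact this
  -- f_or
  · intro A B hm
    have h1 := (hF _).mp hm
    have hi := w.or_iff A B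
    simp only [hF]
    rcases fin2 (w.v A) with ha | ha <;> rcases fin2 (w.v B) with hb | hb <;> simp_all
  -- f_neg
  · intro A hm
    have h1 := (hF _).mp hm
    exact (hT A).mpr (w.neg_val A h1)
  -- t_negneg
  · intro A hm
    exact (hT A).mpr (w.negneg_val A hm)
  -- t_imp1
  · intro A B hm h2
    have h1 : w.v (A.imp B) = 1 := hm
    have ha : w.v A = 1 := h2
    refine (hT B).mpr ?_
    rcases (w.imp_iff A B).mp h1 with h | h <;> omega
  -- t_imp2
  · intro A B hm h2
    have h1 : w.v (A.imp B) = 1 := hm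
    have hb := (hF B).mp h2
    refine (hF A).mpr ?_
    rcases (w.imp_iff A B).mp h1 with h | h <;> omega
  -- f_and1
  · intro A B hm h2
    have h1 := (hF _).mp hm
    have ha : w.v A = 1 := h2
    refine (hF B).mpr ?_
    rcases fin2 (w.v B) with h | h
    · exact h
    · have := (w.and_iff A B).mpr ⟨ha, h⟩; omega
  -- f_and2
  · intro A B hm h2
    have h1 := (hF _).mp hm
    have hb : w.v B = 1 := h2
    refine (hF A).mpr ?_
    rcases fin2 (w.v A) with h | h
    · exact h
    · have := (w.and_iff A B).mpr ⟨h, hb⟩; omega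
  -- t_or1
  · intro A B hm h2
    have h1 : w.v (A.or B) = 1 := hm
    have ha := (hF A).mp h2
    refine (hT B).mpr ?_
    rcases (w.or_iff A B).mp h1 with h | h <;> omega
  -- t_or2
  · intro A B hm h2
    have h1 : w.v (A.or B) = 1 := hm
    have hb := (hF B).mp h2
    refine (hT A).mpr ?_
    rcases (w.or_iff A B).mp h1 with h | h <;> omega
  -- t_neg
  · intro A hm h2
    have h1 : w.v A.neg = 1 := hm
    have hc : w.v A.cons = 1 := h2
    refine (hF A).mpr ?_
    rcases w.cons_val A hc with h | h <;> omega
  -- f_cons_and1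
  · intro A B hm h2
    have h1 := (hF _).mp hm
    have hc : w.v A.cons = 1 := h2
    refine (hF _).mpr ?_
    rcases w.cons_and A B h1 with h | h <;> omega
  -- f_cons_and2
  · intro A B hm h2
    have h1 := (hF _).mp hm
    have hc : w.v B.cons = 1 := h2
    refine (hF _).mpr ?_
    rcases w.cons_and A B h1 with h | h <;> omega
  -- f_cons_or1
  · intro A B hm h2
    have h1 := (hF _).mp hm
    have hc : w.v A.cons = 1 := h2
    refine (hF _).mpr ?_
    rcases w.cons_or A B h1 with h | h <;> omega
  -- f_cons_or2
  · intro A B hm h2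
    have h1 := (hF _).mp hm
    have hc : w.v B.cons = 1 := h2
    refine (hF _).mpr ?_
    rcases w.cons_or A B h1 with h | h <;> omega
  -- f_cons_imp1
  · intro A B hm h2
    have h1 := (hF _).mp hm
    have hc : w.v A.cons = 1 := h2
    refine (hF _).mpr ?_
    rcases w.cons_imp A B h1 with h | h <;> omega
  -- f_cons_imp2
  · intro A B hm h2
    have h1 := (hF _).mp hm
    have hc : w.v B.cons = 1 := h2
    refine (hF _).mpr ?_
    rcases w.cons_imp A B h1 with h | h <;> omega
  -- minors
  all_goals
    intros
    simp only [hT, hF]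
    omega

end C1KE
namespace C1KE

attribute [local instance] Classical.propDecidable

lemma ite_ite_zero (c d : Prop) [Decidable c] [Decidable d] (hd : d) :
    (if c then (0 : Fin 2) else if d then 0 else 1) = 0 := by
  by_cases hc : c <;> simp [hc, hd]

lemma ite_ite_one (c d : Prop) [Decidable c] [Decidable d] (hc : ¬c) (hd : ¬d) :
    (if c then (0 : Fin 2) else if d then 0 else 1) = 1 := by
  simp [hc, hd]

lemma agree (DS : Set SignedFormula) (h : DownwardSaturated DS) :
    ∀ A : C1Formula,
      (SignedFormula.T A ∈ DS → val DS A = 1) ∧ (SignedFormula.F A ∈ DS → val DS A = 0) := by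
  suffices H : ∀ n (A : C1Formula), fsize A ≤ n →
      ((SignedFormula.T A ∈ DS → val DS A = 1) ∧ (SignedFormula.F A ∈ DS → val DS A = 0)) from
    fun A => H (fsize A) A le_rfl
  intro n
  induction n with
  | zero => intro A hA; have := fsize_pos A; omega
  | succ n IH =>
    intro A hA
    cases A with
    | atom m =>
      constructor
      · intro hm
        have hnF : SignedFormula.F (C1Formula.atom m) ∉ DS := h.no_conj _ hm
        rw [val_atom, if_neg hnF]
      · intro hm
        rw [val_atom, if_pos hm]
    | and X Y =>
      have hfx := fsize_pos X
      have hfy := fsize_pos Y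
      simp only [fsize] at hA
      have hX : fsize X ≤ n := by omega
      have hY : fsize Y ≤ n := by omega
      constructor
      · intro hm
        obtain ⟨h1, h2⟩ := h.t_and X Y hm
        rw [val_and, if_pos ⟨(IH X hX).1 h1, (IH Y hY).1 h2⟩]
      · intro hm
        rcases h.f_and1_minor X Y hm with h1 | h1
        · have h2 := (IH Y hY).2 (h.f_and1 X Y hm h1)
          rw [val_and, if_neg (by simp [h2])]
        · have h2 := (IH X hX).2 h1
          rw [val_and, if_neg (by simp [h2])]
    | or X Y =>
      have hfx := fsize_pos X
      have hfy := fsize_pos Y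
      simp only [fsize] at hA
      have hX : fsize X ≤ n := by omega
      have hY : fsize Y ≤ n := by omega
      constructor
      · intro hm
        rcases h.t_or1_minor X Y hm with h1 | h1
        · have h2 := (IH Y hY).1 (h.t_or1 X Y hm h1)
          rw [val_or, if_pos (Or.inr h2)]
        · rw [val_or, if_pos (Or.inl ((IH X hX).1 h1))]
      · intro hm
        obtain ⟨h1, h2⟩ := h.f_or X Y hm
        rw [val_or, if_neg (by simp [(IH X hX).2 h1, (IH Y hY).2 h2])]
    | imp X Y =>
      have hfx := fsize_pos X
      have hfy := fsize_pos Y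
      simp only [fsize] at hA
      have hX : fsize X ≤ n := by omega
      have hY : fsize Y ≤ n := by omega
      constructor
      · intro hm
        rcases h.t_imp1_minor X Y hm with h1 | h1
        · have h2 := (IH Y hY).1 (h.t_imp1 X Y hm h1)
          rw [val_imp, if_pos (Or.inr h2)]
        · rw [val_imp, if_pos (Or.inl ((IH X hX).2 h1))]
      · intro hm
        obtain ⟨h1, h2⟩ := h.f_imp X Y hm
        rw [val_imp, if_neg (by simp [(IH X hX).1 h1, (IH Y hY).2 h2])]
    | neg B =>
      constructor
      · intro hm
        have hnF : SignedFormula.F (C1Formula.neg B) ∉ DS := h.no_conj _ hm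
        cases B with
        | atom m =>
          by_cases h0 : val DS (C1Formula.atom m) = 0
          · rw [val, if_pos h0]
          · rw [val, if_neg h0, if_neg hnF]
        | neg D =>
          simp only [fsize] at hA
          have hD : fsize D ≤ n := by omega
          have hD1 : val DS D = 1 := (IH D hD).1 (h.t_negneg D hm)
          by_cases h0 : val DS D.neg = 0
          · rw [val, if_pos h0]
          · rw [val, if_neg h0]
            exact ite_ite_one _ _ (by simp [hD1]) hnF
        | and X Y =>
          have hfx := fsize_pos X
          have hfy := fsize_pos Y
          simp only [fsize] at hA
          by_cases h0 : val DS (X.and Y) = 0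
          · rw [val, if_pos h0]
          · rw [val, if_neg h0]
            rcases h.t_neg_minor (X.and Y) hm with hTc | hFc
            · have := (IH (X.and Y) (by simp [fsize]; omega)).2 (h.t_neg (X.and Y) hm hTc)
              exact absurd this h0
            · by_cases hYX : Y = C1Formula.neg X
              · subst hYX
                have h1 := h.f_neg _ hFc
                obtain ⟨h2, h3⟩ := h.t_and _ _ h1
                obtain ⟨h4, h5⟩ := h.t_and _ _ h2
                have h6 : SignedFormula.F X ∈ DS := h.t_neg X h5 hm
                exact absurd h6 (h.no_conj _ h4)
              · rcases h.f_cons_and1_minor X Y hFc with hcX | hcX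
                · have h1 := h.f_neg _ (h.f_cons_and1 X Y hFc hcX)
                  obtain ⟨h2, h3⟩ := h.t_and _ _ h1
                  have hv1 : val DS Y = 1 := (IH Y (by omega)).1 h2
                  have hv2 : val DS Y.neg = 1 := (IH Y.neg (by simp [fsize]; omega)).1 h3
                  exact ite_ite_one _ _ (by simp [hYX, hv1, hv2]) hnF
                · have h1 := h.f_neg _ hcX
                  obtain ⟨h2, h3⟩ := h.t_and _ _ h1
                  have hv1 : val DS X = 1 := (IH X (by omega)).1 h2
                  have hv2 : val DS X.neg = 1 := (IH X.neg (by simp [fsize]; omega)).1 h3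
                  exact ite_ite_one _ _ (by simp [hYX, hv1, hv2]) hnF
        | or X Y =>
          have hfx := fsize_pos X
          have hfy := fsize_pos Y
          simp only [fsize] at hA
          by_cases h0 : val DS (X.or Y) = 0
          · rw [val, if_pos h0]
          · rw [val, if_neg h0]
            rcases h.t_neg_minor (X.or Y) hm with hTc | hFc
            · have := (IH (X.or Y) (by simp [fsize]; omega)).2 (h.t_neg (X.or Y) hm hTc)
              exact absurd this h0
            · rcases h.f_cons_or1_minor X Y hFc with hcX | hcX
              · have h1 := h.f_neg _ (h.f_cons_or1 X Y hFc hcX)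
                obtain ⟨h2, h3⟩ := h.t_and _ _ h1
                have hv1 : val DS Y = 1 := (IH Y (by omega)).1 h2
                have hv2 : val DS Y.neg = 1 := (IH Y.neg (by simp [fsize]; omega)).1 h3
                exact ite_ite_one _ _ (by simp [hv1, hv2]) hnF
              · have h1 := h.f_neg _ hcX
                obtain ⟨h2, h3⟩ := h.t_and _ _ h1
                have hv1 : val DS X = 1 := (IH X (by omega)).1 h2
                have hv2 : val DS X.neg = 1 := (IH X.neg (by simp [fsize]; omega)).1 h3
                exact ite_ite_one _ _ (by simp [hv1, hv2]) hnF
        | imp X Y =>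
          have hfx := fsize_pos X
          have hfy := fsize_pos Y
          simp only [fsize] at hA
          by_cases h0 : val DS (X.imp Y) = 0
          · rw [val, if_pos h0]
          · rw [val, if_neg h0]
            rcases h.t_neg_minor (X.imp Y) hm with hTc | hFc
            · have := (IH (X.imp Y) (by simp [fsize]; omega)).2 (h.t_neg (X.imp Y) hm hTc)
              exact absurd this h0
            · rcases h.f_cons_imp1_minor X Y hFc with hcX | hcX
              · have h1 := h.f_neg _ (h.f_cons_imp1 X Y hFc hcX)
                obtain ⟨h2, h3⟩ := h.t_and _ _ h1
                have hv1 : val DS Y = 1 := (IH Y (by omega)).1 h2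
                have hv2 : val DS Y.neg = 1 := (IH Y.neg (by simp [fsize]; omega)).1 h3
                exact ite_ite_one _ _ (by simp [hv1, hv2]) hnF
              · have h1 := h.f_neg _ hcX
                obtain ⟨h2, h3⟩ := h.t_and _ _ h1
                have hv1 : val DS X = 1 := (IH X (by omega)).1 h2
                have hv2 : val DS X.neg = 1 := (IH X.neg (by simp [fsize]; omega)).1 h3
                exact ite_ite_one _ _ (by simp [hv1, hv2]) hnF
      · intro hm
        have hB : fsize B ≤ n := by simp only [fsize] at hA; omega
        have hB1 : val DS B = 1 := (IH B hB).1 (h.f_neg B hm)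
        cases B with
        | atom m => rw [val, if_neg (by simp [hB1]), if_pos hm]
        | neg D =>
          rw [val, if_neg (by simp [hB1])]
          exact ite_ite_zero _ _ hm
        | and X Y =>
          rw [val, if_neg (by simp [hB1])]
          exact ite_ite_zero _ _ hm
        | or X Y =>
          rw [val, if_neg (by simp [hB1])]
          exact ite_ite_zero _ _ hm
        | imp X Y =>
          rw [val, if_neg (by simp [hB1])]
          exact ite_ite_zero _ _ hm

end C1KE
/-- A set DS' of signed formulas of C1 is satisfiable iff it is contained in
some C1 downward saturated set DS''. -/
theorem c1_sat_iff_subset_downward_saturated (DS' : Set SignedFormula) :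
    SatSet DS' ↔ ∃ DS'' : Set SignedFormula, DownwardSaturated DS'' ∧ DS' ⊆ DS'' := by
  constructor
  · rintro ⟨w, hw⟩
    exact ⟨{sf | w.sv sf = 1}, C1KE.sat_forward w, fun sf hsf => hw sf hsf⟩
  · rintro ⟨DS, hDS, hsub⟩
    refine ⟨C1KE.mkVal DS, fun sf hsf => ?_⟩
    cases sf with
    | T A => exact (C1KE.agree DS hDS A).1 (hsub hsf)
    | F A =>
      show 1 - C1KE.val DS A = 1
      rw [(C1KE.agree DS hDS A).2 (hsub hsf)]
      decide
end

section
/- A set DS' of signed formulas of C1 is unsatisfiable if and only if there is no C1 downward saturated set DS'' such that DS' ⊆ DS''. -/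
open SignedFormula

/-! Development: model construction -/

def sz : C1Formula → ℕ
  | .atom _ => 1
  | .neg A => sz A + 1
  | .and A B => sz A + sz B + 1
  | .or A B => sz A + sz B + 1
  | .imp A B => sz A + sz B + 1

open Classical in
noncomputable def val (DS : Set SignedFormula) : C1Formula → Fin 2
  | .atom n => if F (.atom n) ∈ DS then 0 else 1
  | .and A B => if val DS A = 1 ∧ val DS B = 1 then 1 else 0
  | .or A B  => if val DS A = 1 ∨ val DS B = 1 then 1 else 0
  | .imp A B => if val DS A = 0 ∨ val DS B = 1 then 1 else 0
  | .neg X =>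
      if val DS X = 0 then 1
      else if T X.neg ∈ DS then 1
      else
        match X with
        | .and (.and A B) (.neg Y) =>
            if h : Y = .and A B then
              (if val DS A.cons = 1 ∧ val DS B.cons = 1 then 1 else 0) else 0
        | .and (.or A B) (.neg Y) =>
            if h : Y = .or A B then
              (if val DS A.cons = 1 ∧ val DS B.cons = 1 then 1 else 0) else 0
        | .and (.imp A B) (.neg Y) =>
            if h : Y = .imp A B then
              (if val DS A.cons = 1 ∧ val DS B.cons = 1 then 1 else 0) else 0
        | _ => 0
termination_by C => sz C
decreasing_by all_goals (try subst h) <;> simp [sz, C1Formula.cons] <;> omega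
lemma f2a (x : Fin 2) : (¬ x = 1) ↔ x = 0 := by revert x; decide
lemma f2b (x : Fin 2) : (¬ x = 0) ↔ x = 1 := by revert x; decide

lemma val_neg_of_mem (DS : Set SignedFormula) (X : C1Formula) (h : T X.neg ∈ DS) :
    val DS X.neg = 1 := by
  rw [val.eq_def]; split <;> simp_all <;> split_ifs <;> simp_all

lemma val_neg_zero (DS : Set SignedFormula) (X : C1Formula) (h : val DS X.neg = 0) :
    val DS X = 1 := by
  rw [val.eq_def] at h; revert h; split <;> intro h <;> simp_all <;>
    split_ifs at h <;> simp_all [f2b]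
lemma val_cons_and (DS : Set SignedFormula) (A B : C1Formula)
    (h1 : val DS A.cons = 1) (h2 : val DS B.cons = 1) :
    val DS (A.and B).cons = 1 := by
  rw [C1Formula.cons, val.eq_5] <;> split_ifs <;> simp_all

lemma val_cons_or (DS : Set SignedFormula) (A B : C1Formula)
    (h1 : val DS A.cons = 1) (h2 : val DS B.cons = 1) :
    val DS (A.or B).cons = 1 := by
  rw [C1Formula.cons, val.eq_6] <;> split_ifs <;> simp_all

lemma val_cons_imp (DS : Set SignedFormula) (A B : C1Formula)
    (h1 : val DS A.cons = 1) (h2 : val DS B.cons = 1) :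
    val DS (A.imp B).cons = 1 := by
  rw [C1Formula.cons, val.eq_7] <;> split_ifs <;> simp_all

lemma val_neg_one_elim (DS : Set SignedFormula) (X : C1Formula)
    (h : val DS X.neg = 1) (h2 : ¬ val DS X = 0) (h3 : T X.neg ∉ DS) :
    ∃ A B : C1Formula,
      (X = (A.and B).and (A.and B).neg ∨ X = (A.or B).and (A.or B).neg ∨
        X = (A.imp B).and (A.imp B).neg) ∧ val DS A.cons = 1 ∧ val DS B.cons = 1 := by
  rw [val.eq_def] at h
  dsimp only at h
  rw [if_neg h2, if_neg h3] at h
  revert h; split <;> intro h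
  case h_1 A B Y =>
    split_ifs at h with hy hc
    · exact ⟨A, B, Or.inl (by rw [hy]), hc⟩
    · exact absurd h (by decide)
    · exact absurd h (by decide)
  case h_2 A B Y =>
    split_ifs at h with hy hc
    · exact ⟨A, B, Or.inr (Or.inl (by rw [hy])), hc⟩
    · exact absurd h (by decide)
    · exact absurd h (by decide)
  case h_3 A B Y =>
    split_ifs at h with hy hc
    · exact ⟨A, B, Or.inr (Or.inr (by rw [hy])), hc⟩
    · exact absurd h (by decide)
    · exact absurd h (by decide)
  case h_4 => exact absurd h (by decide)
lemma val_and_iff (DS : Set SignedFormula) (A B : C1Formula) :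
    val DS (A.and B) = 1 ↔ (val DS A = 1 ∧ val DS B = 1) := by
  rw [val.eq_2]; split_ifs with hh <;> simp [hh]

lemma val_or_iff (DS : Set SignedFormula) (A B : C1Formula) :
    val DS (A.or B) = 1 ↔ (val DS A = 1 ∨ val DS B = 1) := by
  rw [val.eq_3]; split_ifs with hh <;> simp [hh]

lemma val_imp_iff (DS : Set SignedFormula) (A B : C1Formula) :
    val DS (A.imp B) = 1 ↔ (val DS A = 0 ∨ val DS B = 1) := by
  rw [val.eq_4]; split_ifs with hh <;> simp [hh]

lemma fin2 (x : Fin 2) : x = 0 ∨ x = 1 := by revert x; decide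

lemma inv (DS : Set SignedFormula) (h : DownwardSaturated DS) :
    ∀ C : C1Formula, (T C ∈ DS → val DS C = 1) ∧ (F C ∈ DS → val DS C = 0) := by
  suffices H : ∀ n : ℕ, ∀ C : C1Formula, sz C < n →
      ((T C ∈ DS → val DS C = 1) ∧ (F C ∈ DS → val DS C = 0)) by
    exact fun C => H (sz C + 1) C (by omega)
  intro n
  induction n with
  | zero => intro C hC; omega
  | succ n IH =>
    intro C hC
    rcases C with m | X | ⟨A, B⟩ | ⟨A, B⟩ | ⟨A, B⟩
    · constructor
      · intro hT
        have hF : F (C1Formula.atom m) ∉ DS := by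
          have := h.no_conj _ hT; simpa [SignedFormula.conj] using this
        rw [val.eq_1, if_neg hF]
      · intro hF; rw [val.eq_1, if_pos hF]
    · -- neg case
      have hX : sz X < n := by simp [sz] at hC; omega
      constructor
      · exact val_neg_of_mem DS X
      · intro hF
        have hTn : T X.neg ∉ DS := by
          have := h.no_conj _ hF; simpa [SignedFormula.conj] using this
        have hTX : T X ∈ DS := h.f_neg X hF
        have hX1 : val DS X = 1 := (IH X hX).1 hTX
        rcases fin2 (val DS X.neg) with h0 | h1
        · exact h0
        · exfalso
          obtain ⟨A, B, shape, hcA, hcB⟩ :=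
            val_neg_one_elim DS X h1 (by rw [hX1]; decide) hTn
          have hA : sz A.cons < n := by
            rcases shape with e | e | e <;> subst e <;>
              simp [sz, C1Formula.cons] at hC ⊢ <;> omega
          have hB : sz B.cons < n := by
            rcases shape with e | e | e <;> subst e <;>
              simp [sz, C1Formula.cons] at hC ⊢ <;> omega
          rcases shape with e | e | e <;> subst e
          · have hF' : F (A.and B).cons ∈ DS := hF
            rcases h.f_cons_and1_minor A B hF' with hTc | hFc
            · have := (IH B.cons hB).2 (h.f_cons_and1 A B hF' hTc)
              rw [hcB] at this; exact absurd this (by decide)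
            · have := (IH A.cons hA).2 hFc
              rw [hcA] at this; exact absurd this (by decide)
          · have hF' : F (A.or B).cons ∈ DS := hF
            rcases h.f_cons_or1_minor A B hF' with hTc | hFc
            · have := (IH B.cons hB).2 (h.f_cons_or1 A B hF' hTc)
              rw [hcB] at this; exact absurd this (by decide)
            · have := (IH A.cons hA).2 hFc
              rw [hcA] at this; exact absurd this (by decide)
          · have hF' : F (A.imp B).cons ∈ DS := hF
            rcases h.f_cons_imp1_minor A B hF' with hTc | hFc
            · have := (IH B.cons hB).2 (h.f_cons_imp1 A B hF' hTc)
              rw [hcB] at this; exact absurd this (by decide)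
            · have := (IH A.cons hA).2 hFc
              rw [hcA] at this; exact absurd this (by decide)
    · -- and
      have hA : sz A < n := by simp [sz] at hC; omega
      have hB : sz B < n := by simp [sz] at hC; omega
      constructor
      · intro hT
        obtain ⟨h1, h2⟩ := h.t_and A B hT
        exact (val_and_iff DS A B).mpr ⟨(IH A hA).1 h1, (IH B hB).1 h2⟩
      · intro hF
        rcases fin2 (val DS (A.and B)) with h0 | h1
        · exact h0
        · exfalso
          obtain ⟨v1, v2⟩ := (val_and_iff DS A B).mp h1
          rcases h.f_and1_minor A B hF with hTA | hFA
          · have := (IH B hB).2 (h.f_and1 A B hF hTA)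
            rw [v2] at this; exact absurd this (by decide)
          · have := (IH A hA).2 hFA
            rw [v1] at this; exact absurd this (by decide)
    · -- or
      have hA : sz A < n := by simp [sz] at hC; omega
      have hB : sz B < n := by simp [sz] at hC; omega
      constructor
      · intro hT
        rcases h.t_or1_minor A B hT with hFA | hTA
        · exact (val_or_iff DS A B).mpr (Or.inr ((IH B hB).1 (h.t_or1 A B hT hFA)))
        · exact (val_or_iff DS A B).mpr (Or.inl ((IH A hA).1 hTA))
      · intro hF
        obtain ⟨h1, h2⟩ := h.f_or A B hF
        rcases fin2 (val DS (A.or B)) with h0 | h1'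
        · exact h0
        · exfalso
          rcases (val_or_iff DS A B).mp h1' with v | v
          · have := (IH A hA).2 h1; rw [v] at this; exact absurd this (by decide)
          · have := (IH B hB).2 h2; rw [v] at this; exact absurd this (by decide)
    · -- imp
      have hA : sz A < n := by simp [sz] at hC; omega
      have hB : sz B < n := by simp [sz] at hC; omega
      constructor
      · intro hT
        rcases h.t_imp1_minor A B hT with hTA | hFA
        · exact (val_imp_iff DS A B).mpr (Or.inr ((IH B hB).1 (h.t_imp1 A B hT hTA)))
        · exact (val_imp_iff DS A B).mpr (Or.inl ((IH A hA).2 hFA))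
      · intro hF
        obtain ⟨h1, h2⟩ := h.f_imp A B hF
        rcases fin2 (val DS (A.imp B)) with h0 | h1'
        · exact h0
        · exfalso
          rcases (val_imp_iff DS A B).mp h1' with v | v
          · have := (IH A hA).1 h1; rw [v] at this; exact absurd this (by decide)
          · have := (IH B hB).2 h2; rw [v] at this; exact absurd this (by decide)
lemma key (DS : Set SignedFormula) (h : DownwardSaturated DS) :
    ∀ Y : C1Formula, val DS Y = 1 → val DS Y.neg = 1 → val DS Y.cons = 0 := by
  suffices H : ∀ n : ℕ, ∀ Y : C1Formula, sz Y < n →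
      val DS Y = 1 → val DS Y.neg = 1 → val DS Y.cons = 0 by
    exact fun Y => H (sz Y + 1) Y (by omega)
  intro n
  induction n with
  | zero => intro Y hY; omega
  | succ n IH =>
    intro Y hY h1 hn1
    by_cases hTn : T Y.neg ∈ DS
    · rcases fin2 (val DS Y.cons) with h0 | hc1
      · exact h0
      · exfalso
        by_cases hT : T Y.cons ∈ DS
        · have := (inv DS h Y).2 (h.t_neg Y hTn hT)
          rw [h1] at this; exact absurd this (by decide)
        · rcases h.t_neg_minor Y hTn with hTc | hFc
          · exact hT hTc
          · have := (inv DS h Y.cons).2 hFc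
            rw [hc1] at this; exact absurd this (by decide)
    · exfalso
      obtain ⟨C, D, shape, hcC, hcD⟩ :=
        val_neg_one_elim DS Y hn1 (by rw [h1]; decide) hTn
      rcases shape with e | e | e <;> subst e
      · obtain ⟨w1, w2⟩ := (val_and_iff DS _ _).mp h1
        have := IH (C.and D) (by simp [sz] at hY ⊢; omega) w1 w2
        rw [val_cons_and DS C D hcC hcD] at this
        exact absurd this (by decide)
      · obtain ⟨w1, w2⟩ := (val_and_iff DS _ _).mp h1
        have := IH (C.or D) (by simp [sz] at hY ⊢; omega) w1 w2
        rw [val_cons_or DS C D hcC hcD] at this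
        exact absurd this (by decide)
      · obtain ⟨w1, w2⟩ := (val_and_iff DS _ _).mp h1
        have := IH (C.imp D) (by simp [sz] at hY ⊢; omega) w1 w2
        rw [val_cons_imp DS C D hcC hcD] at this
        exact absurd this (by decide)

noncomputable def model (DS : Set SignedFormula) (h : DownwardSaturated DS) : C1Valuation where
  v := val DS
  and_iff := val_and_iff DS
  or_iff := val_or_iff DS
  imp_iff := val_imp_iff DS
  neg_val := fun A => val_neg_zero DS A
  negneg_val := by
    intro A h1
    by_cases h0 : val DS A.neg = 0
    · exact val_neg_zero DS A h0
    · by_cases hT : T A.neg.neg ∈ DS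
      · exact (inv DS h A).1 (h.t_negneg A hT)
      · obtain ⟨C, D, shape, _, _⟩ := val_neg_one_elim DS A.neg h1 h0 hT
        rcases shape with e | e | e <;> exact absurd e (by simp)
  cons_val := by
    intro A h1
    rcases fin2 (val DS A) with hA | hA
    · exact Or.inl hA
    · rcases fin2 (val DS A.neg) with hN | hN
      · exact Or.inr hN
      · have := key DS h A hA hN
        rw [h1] at this; exact absurd this (by decide)
  cons_and := by
    intro A B h0
    by_cases hA : val DS A.cons = 0
    · exact Or.inl hA
    · by_cases hB : val DS B.cons = 0
      · exact Or.inr hB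
      · have := val_cons_and DS A B ((fin2 _).resolve_left hA) ((fin2 _).resolve_left hB)
        rw [h0] at this; exact absurd this (by decide)
  cons_or := by
    intro A B h0
    by_cases hA : val DS A.cons = 0
    · exact Or.inl hA
    · by_cases hB : val DS B.cons = 0
      · exact Or.inr hB
      · have := val_cons_or DS A B ((fin2 _).resolve_left hA) ((fin2 _).resolve_left hB)
        rw [h0] at this; exact absurd this (by decide)
  cons_imp := by
    intro A B h0
    by_cases hA : val DS A.cons = 0
    · exact Or.inl hA
    · by_cases hB : val DS B.cons = 0
      · exact Or.inr hB
      · have := val_cons_imp DS A B ((fin2 _).resolve_left hA) ((fin2 _).resolve_left hB)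
        rw [h0] at this; exact absurd this (by decide)
lemma sv_T (w : C1Valuation) (A : C1Formula) : w.sv (T A) = 1 ↔ w.v A = 1 := by
  simp [C1Valuation.sv]

lemma sv_F (w : C1Valuation) (A : C1Formula) : w.sv (F A) = 1 ↔ w.v A = 0 := by
  simp only [C1Valuation.sv]
  rcases fin2 (w.v A) with e | e <;> rw [e] <;> simp <;> decide

/-- A set DS' of signed formulas of C1 is unsatisfiable iff there is no
C1 downward saturated set DS'' with DS' ⊆ DS''. -/
theorem c1_unsat_iff_no_downward_saturated_superset (DS' : Set SignedFormula) :
    ¬ SatSet DS' ↔ ¬ ∃ DS'' : Set SignedFormula, DownwardSaturated DS'' ∧ DS' ⊆ DS'' := by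
  constructor
  · intro hu ⟨DS'', hds, hsub⟩
    apply hu
    refine ⟨model DS'' hds, fun sf hsf => ?_⟩
    have hsf' := hsub hsf
    rcases sf with A | A
    · exact (sv_T _ A).mpr ((inv DS'' hds A).1 hsf')
    · exact (sv_F _ A).mpr ((inv DS'' hds A).2 hsf')
  · rintro hne ⟨w, hw⟩
    apply hne
    refine ⟨{sf | w.sv sf = 1}, ?_, fun sf hsf => hw sf hsf⟩
    have mT : ∀ A : C1Formula, T A ∈ {sf | w.sv sf = 1} ↔ w.v A = 1 := fun A => sv_T w A
    have mF : ∀ A : C1Formula, F A ∈ {sf | w.sv sf = 1} ↔ w.v A = 0 := fun A => sv_F w A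
    have n01 : ∀ x : Fin 2, x = 0 → x = 1 → False := by decide
    have resT : ∀ A : C1Formula, w.v A ≠ 1 → w.v A = 0 := fun A hA => (fin2 _).resolve_right hA
    have resF : ∀ A : C1Formula, w.v A ≠ 0 → w.v A = 1 := fun A hA => (fin2 _).resolve_left hA
    constructor
    case no_conj =>
      rintro (A | A) hm hc
      · exact n01 _ ((mF A).mp hc) ((mT A).mp hm)
      · exact n01 _ ((mF A).mp hm) ((mT A).mp hc)
    case f_imp =>
      intro A B hm
      have := (mF _).mp hm
      have h2 : ¬ (w.v A = 0 ∨ w.v B = 1) := fun hc =>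
        n01 _ this ((w.imp_iff A B).mpr hc)
      push_neg at h2
      exact ⟨(mT A).mpr (resF A h2.1), (mF B).mpr (resT B h2.2)⟩
    case t_and =>
      intro A B hm
      obtain ⟨h1, h2⟩ := (w.and_iff A B).mp ((mT _).mp hm)
      exact ⟨(mT A).mpr h1, (mT B).mpr h2⟩
    case f_or =>
      intro A B hm
      have := (mF _).mp hm
      have h2 : ¬ (w.v A = 1 ∨ w.v B = 1) := fun hc =>
        n01 _ this ((w.or_iff A B).mpr hc)
      push_neg at h2
      exact ⟨(mF A).mpr (resT A h2.1), (mF B).mpr (resT B h2.2)⟩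
    case f_neg =>
      intro A hm
      exact (mT A).mpr (w.neg_val A ((mF _).mp hm))
    case t_negneg =>
      intro A hm
      exact (mT A).mpr (w.negneg_val A ((mT _).mp hm))
    case t_imp1 =>
      intro A B hm hA
      have := (w.imp_iff A B).mp ((mT _).mp hm)
      rcases this with h' | h'
      · exact absurd ((mT A).mp hA) (fun e => n01 _ h' e)
      · exact (mT B).mpr h'
    case t_imp2 =>
      intro A B hm hB
      rcases (w.imp_iff A B).mp ((mT _).mp hm) with h' | h'
      · exact (mF A).mpr h'
      · exact absurd ((mF B).mp hB) (fun e => n01 _ e h')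
    case f_and1 =>
      intro A B hm hA
      refine (mF B).mpr (resT B fun hB => ?_)
      exact n01 _ ((mF _).mp hm) ((w.and_iff A B).mpr ⟨(mT A).mp hA, hB⟩)
    case f_and2 =>
      intro A B hm hB
      refine (mF A).mpr (resT A fun hA => ?_)
      exact n01 _ ((mF _).mp hm) ((w.and_iff A B).mpr ⟨hA, (mT B).mp hB⟩)
    case t_or1 =>
      intro A B hm hA
      rcases (w.or_iff A B).mp ((mT _).mp hm) with h' | h'
      · exact absurd ((mF A).mp hA) (fun e => n01 _ e h')
      · exact (mT B).mpr h'
    case t_or2 =>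
      intro A B hm hB
      rcases (w.or_iff A B).mp ((mT _).mp hm) with h' | h'
      · exact (mT A).mpr h'
      · exact absurd ((mF B).mp hB) (fun e => n01 _ e h')
    case t_neg =>
      intro A hm hc
      rcases w.cons_val A ((mT _).mp hc) with h' | h'
      · exact (mF A).mpr h'
      · exact absurd ((mT _).mp hm) (fun e => n01 _ h' e)
    case f_cons_and1 =>
      intro A B hm hA
      refine (mF B.cons).mpr (resT _ fun hB => ?_)
      rcases w.cons_and A B ((mF _).mp hm) with h' | h'
      · exact n01 _ h' ((mT _).mp hA)
      · exact n01 _ h' hB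
    case f_cons_and2 =>
      intro A B hm hB
      refine (mF A.cons).mpr (resT _ fun hA => ?_)
      rcases w.cons_and A B ((mF _).mp hm) with h' | h'
      · exact n01 _ h' hA
      · exact n01 _ h' ((mT _).mp hB)
    case f_cons_or1 =>
      intro A B hm hA
      refine (mF B.cons).mpr (resT _ fun hB => ?_)
      rcases w.cons_or A B ((mF _).mp hm) with h' | h'
      · exact n01 _ h' ((mT _).mp hA)
      · exact n01 _ h' hB
    case f_cons_or2 =>
      intro A B hm hB
      refine (mF A.cons).mpr (resT _ fun hA => ?_)
      rcases w.cons_or A B ((mF _).mp hm) with h' | h'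
      · exact n01 _ h' hA
      · exact n01 _ h' ((mT _).mp hB)
    case f_cons_imp1 =>
      intro A B hm hA
      refine (mF B.cons).mpr (resT _ fun hB => ?_)
      rcases w.cons_imp A B ((mF _).mp hm) with h' | h'
      · exact n01 _ h' ((mT _).mp hA)
      · exact n01 _ h' hB
    case f_cons_imp2 =>
      intro A B hm hB
      refine (mF A.cons).mpr (resT _ fun hA => ?_)
      rcases w.cons_imp A B ((mF _).mp hm) with h' | h'
      · exact n01 _ h' hA
      · exact n01 _ h' ((mT _).mp hB)
    all_goals intros
    all_goals simp only [mT, mF]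
    all_goals first
      | exact fin2 _
      | exact (fin2 _).symm
end

section
/- (Soundness of the C1 KE system) For any set of formulas Γ and formula B of C1, if there is a closed C1 KE tableau for the sequent Γ ⊢ B, then Γ ⊨_{C1} B, i.e., every C1-valuation that assigns 1 to all formulas of Γ assigns 1 to B. -/
open SignedFormula

/-- `KEClosed S` holds iff there is a closed C1 KE tableau whose root branch
consists of the signed formulas in `S`.  A branch is identified with the set of
signed formulas occurring on it; linear rules add their conclusions to the
branch, the 0-premiss rule PB splits the branch in two, and a branch containing
both T A and F A is closed. -/
inductive KEClosed : Set SignedFormula → Prop where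
  | close (S : Set SignedFormula) (A : C1Formula)
      (hT : T A ∈ S) (hF : F A ∈ S) : KEClosed S
  | t_imp1 (S : Set SignedFormula) (A B : C1Formula)
      (h : T (A.imp B) ∈ S) (h' : T A ∈ S)
      (hc : KEClosed (insert (T B) S)) : KEClosed S
  | t_imp2 (S : Set SignedFormula) (A B : C1Formula)
      (h : T (A.imp B) ∈ S) (h' : F B ∈ S)
      (hc : KEClosed (insert (F A) S)) : KEClosed S
  | f_imp (S : Set SignedFormula) (A B : C1Formula)
      (h : F (A.imp B) ∈ S)
      (hc : KEClosed (insert (T A) (insert (F B) S))) : KEClosed S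
  | t_and (S : Set SignedFormula) (A B : C1Formula)
      (h : T (A.and B) ∈ S)
      (hc : KEClosed (insert (T A) (insert (T B) S))) : KEClosed S
  | f_and1 (S : Set SignedFormula) (A B : C1Formula)
      (h : F (A.and B) ∈ S) (h' : T A ∈ S)
      (hc : KEClosed (insert (F B) S)) : KEClosed S
  | f_and2 (S : Set SignedFormula) (A B : C1Formula)
      (h : F (A.and B) ∈ S) (h' : T B ∈ S)
      (hc : KEClosed (insert (F A) S)) : KEClosed S
  | t_or1 (S : Set SignedFormula) (A B : C1Formula)
      (h : T (A.or B) ∈ S) (h' : F A ∈ S)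
      (hc : KEClosed (insert (T B) S)) : KEClosed S
  | t_or2 (S : Set SignedFormula) (A B : C1Formula)
      (h : T (A.or B) ∈ S) (h' : F B ∈ S)
      (hc : KEClosed (insert (T A) S)) : KEClosed S
  | f_or (S : Set SignedFormula) (A B : C1Formula)
      (h : F (A.or B) ∈ S)
      (hc : KEClosed (insert (F A) (insert (F B) S))) : KEClosed S
  | f_neg (S : Set SignedFormula) (A : C1Formula)
      (h : F A.neg ∈ S)
      (hc : KEClosed (insert (T A) S)) : KEClosed S
  | t_negneg (S : Set SignedFormula) (A : C1Formula)
      (h : T A.neg.neg ∈ S)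
      (hc : KEClosed (insert (T A) S)) : KEClosed S
  | t_neg (S : Set SignedFormula) (A : C1Formula)
      (h : T A.neg ∈ S) (h' : T A.cons ∈ S)
      (hc : KEClosed (insert (F A) S)) : KEClosed S
  | f_cons_and1 (S : Set SignedFormula) (A B : C1Formula)
      (h : F (A.and B).cons ∈ S) (h' : T A.cons ∈ S)
      (hc : KEClosed (insert (F B.cons) S)) : KEClosed S
  | f_cons_and2 (S : Set SignedFormula) (A B : C1Formula)
      (h : F (A.and B).cons ∈ S) (h' : T B.cons ∈ S)
      (hc : KEClosed (insert (F A.cons) S)) : KEClosed S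
  | f_cons_or1 (S : Set SignedFormula) (A B : C1Formula)
      (h : F (A.or B).cons ∈ S) (h' : T A.cons ∈ S)
      (hc : KEClosed (insert (F B.cons) S)) : KEClosed S
  | f_cons_or2 (S : Set SignedFormula) (A B : C1Formula)
      (h : F (A.or B).cons ∈ S) (h' : T B.cons ∈ S)
      (hc : KEClosed (insert (F A.cons) S)) : KEClosed S
  | f_cons_imp1 (S : Set SignedFormula) (A B : C1Formula)
      (h : F (A.imp B).cons ∈ S) (h' : T A.cons ∈ S)
      (hc : KEClosed (insert (F B.cons) S)) : KEClosed S
  | f_cons_imp2 (S : Set SignedFormula) (A B : C1Formula)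
      (h : F (A.imp B).cons ∈ S) (h' : T B.cons ∈ S)
      (hc : KEClosed (insert (F A.cons) S)) : KEClosed S
  | pb (S : Set SignedFormula) (A : C1Formula)
      (h1 : KEClosed (insert (T A) S))
      (h2 : KEClosed (insert (F A) S)) : KEClosed S

/-- The initial branch of a C1 KE tableau for the sequent Γ ⊢ B:
it contains T A for each A ∈ Γ, together with F B. -/
def initialBranch (Γ : Set C1Formula) (B : C1Formula) : Set SignedFormula :=
  (SignedFormula.T '' Γ) ∪ {F B}

/-- There is a closed C1 KE tableau for the sequent Γ ⊢ B. -/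
def KEProvable (Γ : Set C1Formula) (B : C1Formula) : Prop :=
  KEClosed (initialBranch Γ B)

lemma svT_one (w : C1Valuation) (A : C1Formula) : w.sv (.T A) = 1 ↔ w.v A = 1 := Iff.rfl

lemma svF_one (w : C1Valuation) (A : C1Formula) : w.sv (.F A) = 1 ↔ w.v A = 0 := by
  show (1 : Fin 2) - w.v A = 1 ↔ _
  rcases fin2 (w.v A) with h | h <;> simp [h]

lemma ext_insert {w : C1Valuation} {S : Set SignedFormula} {x : SignedFormula}
    (hx : w.sv x = 1) (hs : ∀ sf ∈ S, w.sv sf = 1) :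
    ∀ sf ∈ insert x S, w.sv sf = 1 := by
  intro sf hsf
  rcases Set.mem_insert_iff.1 hsf with rfl | h
  · exact hx
  · exact hs _ h

lemma KEClosed.unsat {S : Set SignedFormula} (h : KEClosed S) :
    ∀ w : C1Valuation, ¬ ∀ sf ∈ S, w.sv sf = 1 := by
  induction h with
  | close S A hT hF =>
    intro w hs
    have h1 := (svT_one w A).1 (hs _ hT)
    have h2 := (svF_one w A).1 (hs _ hF)
    rw [h1] at h2; exact absurd h2 (by decide)
  | t_imp1 S A B h h' hc ih =>
    intro w hs; refine ih w (ext_insert ?_ hs)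
    have h1 := (w.imp_iff A B).1 (hs _ h)
    have h2 := (svT_one w A).1 (hs _ h')
    rw [svT_one]
    rcases h1 with h0 | h1
    · rw [h2] at h0; exact absurd h0 (by decide)
    · exact h1
  | t_imp2 S A B h h' hc ih =>
    intro w hs; refine ih w (ext_insert ?_ hs)
    have h1 := (w.imp_iff A B).1 (hs _ h)
    have h2 := (svF_one w B).1 (hs _ h')
    rw [svF_one]
    rcases h1 with h0 | h1
    · exact h0
    · rw [h2] at h1; exact absurd h1 (by decide)
  | f_imp S A B h hc ih =>
    intro w hs
    have h1 := (svF_one w (A.imp B)).1 (hs _ h)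
    have hA : w.v A = 1 := by
      rcases fin2 (w.v A) with h0 | h0
      · have := (w.imp_iff A B).2 (Or.inl h0); rw [h1] at this; exact absurd this (by decide)
      · exact h0
    have hB : w.v B = 0 := by
      rcases fin2 (w.v B) with h0 | h0
      · exact h0
      · have := (w.imp_iff A B).2 (Or.inr h0); rw [h1] at this; exact absurd this (by decide)
    exact ih w (ext_insert ((svT_one w A).2 hA) (ext_insert ((svF_one w B).2 hB) hs))
  | t_and S A B h hc ih =>
    intro w hs
    have h1 := (w.and_iff A B).1 (hs _ h)
    exact ih w (ext_insert ((svT_one w A).2 h1.1) (ext_insert ((svT_one w B).2 h1.2) hs))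
  | f_and1 S A B h h' hc ih =>
    intro w hs; refine ih w (ext_insert ?_ hs)
    have h1 := (svF_one w (A.and B)).1 (hs _ h)
    have h2 := (svT_one w A).1 (hs _ h')
    rw [svF_one]
    rcases fin2 (w.v B) with h0 | h0
    · exact h0
    · have := (w.and_iff A B).2 ⟨h2, h0⟩; rw [h1] at this; exact absurd this (by decide)
  | f_and2 S A B h h' hc ih =>
    intro w hs; refine ih w (ext_insert ?_ hs)
    have h1 := (svF_one w (A.and B)).1 (hs _ h)
    have h2 := (svT_one w B).1 (hs _ h')
    rw [svF_one]
    rcases fin2 (w.v A) with h0 | h0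
    · exact h0
    · have := (w.and_iff A B).2 ⟨h0, h2⟩; rw [h1] at this; exact absurd this (by decide)
  | t_or1 S A B h h' hc ih =>
    intro w hs; refine ih w (ext_insert ?_ hs)
    have h1 := (w.or_iff A B).1 (hs _ h)
    have h2 := (svF_one w A).1 (hs _ h')
    rw [svT_one]
    rcases h1 with h0 | h0
    · rw [h2] at h0; exact absurd h0 (by decide)
    · exact h0
  | t_or2 S A B h h' hc ih =>
    intro w hs; refine ih w (ext_insert ?_ hs)
    have h1 := (w.or_iff A B).1 (hs _ h)
    have h2 := (svF_one w B).1 (hs _ h')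
    rw [svT_one]
    rcases h1 with h0 | h0
    · exact h0
    · rw [h2] at h0; exact absurd h0 (by decide)
  | f_or S A B h hc ih =>
    intro w hs
    have h1 := (svF_one w (A.or B)).1 (hs _ h)
    have hA : w.v A = 0 := by
      rcases fin2 (w.v A) with h0 | h0
      · exact h0
      · have := (w.or_iff A B).2 (Or.inl h0); rw [h1] at this; exact absurd this (by decide)
    have hB : w.v B = 0 := by
      rcases fin2 (w.v B) with h0 | h0
      · exact h0
      · have := (w.or_iff A B).2 (Or.inr h0); rw [h1] at this; exact absurd this (by decide)
    exact ih w (ext_insert ((svF_one w A).2 hA) (ext_insert ((svF_one w B).2 hB) hs))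
  | f_neg S A h hc ih =>
    intro w hs; refine ih w (ext_insert ?_ hs)
    exact (svT_one w A).2 (w.neg_val A ((svF_one w A.neg).1 (hs _ h)))
  | t_negneg S A h hc ih =>
    intro w hs; refine ih w (ext_insert ?_ hs)
    exact (svT_one w A).2 (w.negneg_val A ((svT_one w A.neg.neg).1 (hs _ h)))
  | t_neg S A h h' hc ih =>
    intro w hs; refine ih w (ext_insert ?_ hs)
    have h1 := (svT_one w A.neg).1 (hs _ h)
    have h2 := w.cons_val A ((svT_one w A.cons).1 (hs _ h'))
    rw [svF_one]
    rcases h2 with h0 | h0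
    · exact h0
    · rw [h1] at h0; exact absurd h0 (by decide)
  | f_cons_and1 S A B h h' hc ih =>
    intro w hs; refine ih w (ext_insert ?_ hs)
    have h1 := w.cons_and A B ((svF_one w (A.and B).cons).1 (hs _ h))
    have h2 := (svT_one w A.cons).1 (hs _ h')
    rw [svF_one]
    rcases h1 with h0 | h0
    · rw [h2] at h0; exact absurd h0 (by decide)
    · exact h0
  | f_cons_and2 S A B h h' hc ih =>
    intro w hs; refine ih w (ext_insert ?_ hs)
    have h1 := w.cons_and A B ((svF_one w (A.and B).cons).1 (hs _ h))
    have h2 := (svT_one w B.cons).1 (hs _ h')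
    rw [svF_one]
    rcases h1 with h0 | h0
    · exact h0
    · rw [h2] at h0; exact absurd h0 (by decide)
  | f_cons_or1 S A B h h' hc ih =>
    intro w hs; refine ih w (ext_insert ?_ hs)
    have h1 := w.cons_or A B ((svF_one w (A.or B).cons).1 (hs _ h))
    have h2 := (svT_one w A.cons).1 (hs _ h')
    rw [svF_one]
    rcases h1 with h0 | h0
    · rw [h2] at h0; exact absurd h0 (by decide)
    · exact h0
  | f_cons_or2 S A B h h' hc ih =>
    intro w hs; refine ih w (ext_insert ?_ hs)
    have h1 := w.cons_or A B ((svF_one w (A.or B).cons).1 (hs _ h))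
    have h2 := (svT_one w B.cons).1 (hs _ h')
    rw [svF_one]
    rcases h1 with h0 | h0
    · exact h0
    · rw [h2] at h0; exact absurd h0 (by decide)
  | f_cons_imp1 S A B h h' hc ih =>
    intro w hs; refine ih w (ext_insert ?_ hs)
    have h1 := w.cons_imp A B ((svF_one w (A.imp B).cons).1 (hs _ h))
    have h2 := (svT_one w A.cons).1 (hs _ h')
    rw [svF_one]
    rcases h1 with h0 | h0
    · rw [h2] at h0; exact absurd h0 (by decide)
    · exact h0
  | f_cons_imp2 S A B h h' hc ih =>
    intro w hs; refine ih w (ext_insert ?_ hs)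
    have h1 := w.cons_imp A B ((svF_one w (A.imp B).cons).1 (hs _ h))
    have h2 := (svT_one w B.cons).1 (hs _ h')
    rw [svF_one]
    rcases h1 with h0 | h0
    · exact h0
    · rw [h2] at h0; exact absurd h0 (by decide)
  | pb S A h1 h2 ih1 ih2 =>
    intro w hs
    rcases fin2 (w.v A) with h0 | h0
    · exact ih2 w (ext_insert ((svF_one w A).2 h0) hs)
    · exact ih1 w (ext_insert ((svT_one w A).2 h0) hs)

/-- Soundness of the C1 KE system: if there is a closed C1 KE tableau for
the sequent Γ ⊢ B, then Γ ⊨_{C1} B. -/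
theorem c1_KE_soundness (Γ : Set C1Formula) (B : C1Formula)
    (h : KEProvable Γ B) : C1Valid Γ B := by
  intro w hΓ
  by_contra hB
  apply h.unsat w
  intro sf hsf
  rcases hsf with ⟨A, hA, rfl⟩ | hsf
  · exact hΓ A hA
  · rcases hsf with rfl
    exact (svF_one w B).2 ((fin2 (w.v B)).resolve_right hB)
end

section
/- (Completeness of the C1 KE system) For any set of formulas Γ and formula B of C1, if Γ ⊨_{C1} B (every C1-valuation that assigns 1 to all formulas of Γ assigns 1 to B), then there is a closed C1 KE tableau for the sequent Γ ⊢ B. -/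
open SignedFormula

section AuxCompleteness

/-- Encoding of formulas into ℕ. -/
def C1Formula.toNat : C1Formula → ℕ
  | .atom n => Nat.pair 0 n
  | .neg a => Nat.pair 1 a.toNat
  | .and a b => Nat.pair 2 (Nat.pair a.toNat b.toNat)
  | .or a b => Nat.pair 3 (Nat.pair a.toNat b.toNat)
  | .imp a b => Nat.pair 4 (Nat.pair a.toNat b.toNat)

theorem C1Formula.toNat_injective : Function.Injective C1Formula.toNat := by
  intro a
  induction a with
  | atom n =>
      intro b h; cases b <;> simp [C1Formula.toNat, Nat.pair_eq_pair] at h <;> rw [h]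
  | neg a ih =>
      intro b h; cases b <;> simp [C1Formula.toNat, Nat.pair_eq_pair] at h <;> rw [ih h]
  | and a1 a2 ih1 ih2 =>
      intro b h; cases b <;> simp [C1Formula.toNat, Nat.pair_eq_pair] at h <;>
        rw [ih1 h.1, ih2 h.2]
  | or a1 a2 ih1 ih2 =>
      intro b h; cases b <;> simp [C1Formula.toNat, Nat.pair_eq_pair] at h <;>
        rw [ih1 h.1, ih2 h.2]
  | imp a1 a2 ih1 ih2 =>
      intro b h; cases b <;> simp [C1Formula.toNat, Nat.pair_eq_pair] at h <;>
        rw [ih1 h.1, ih2 h.2]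

instance : Countable C1Formula := ⟨⟨_, C1Formula.toNat_injective⟩⟩

def SignedFormula.enc : SignedFormula → Bool × C1Formula
  | .T a => (true, a)
  | .F a => (false, a)

theorem SignedFormula.enc_injective : Function.Injective SignedFormula.enc := by
  intro x y h; cases x <;> cases y <;> simp [SignedFormula.enc] at h <;> rw [h]

instance : Countable SignedFormula :=
  Function.Injective.countable SignedFormula.enc_injective

instance : Nonempty SignedFormula := ⟨.T (.atom 0)⟩

end AuxCompleteness

theorem KEClosed.mono {S S' : Set SignedFormula} (h : KEClosed S) (hs : S ⊆ S') :
    KEClosed S' := by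
  induction h generalizing S' with
  | close S A hT hF => exact .close _ A (hs hT) (hs hF)
  | t_imp1 S A B h h' hc ih =>
      exact .t_imp1 _ A B (hs h) (hs h') (ih (Set.insert_subset_insert hs))
  | t_imp2 S A B h h' hc ih =>
      exact .t_imp2 _ A B (hs h) (hs h') (ih (Set.insert_subset_insert hs))
  | f_imp S A B h hc ih =>
      exact .f_imp _ A B (hs h) (ih (Set.insert_subset_insert (Set.insert_subset_insert hs)))
  | t_and S A B h hc ih =>
      exact .t_and _ A B (hs h) (ih (Set.insert_subset_insert (Set.insert_subset_insert hs)))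
  | f_and1 S A B h h' hc ih =>
      exact .f_and1 _ A B (hs h) (hs h') (ih (Set.insert_subset_insert hs))
  | f_and2 S A B h h' hc ih =>
      exact .f_and2 _ A B (hs h) (hs h') (ih (Set.insert_subset_insert hs))
  | t_or1 S A B h h' hc ih =>
      exact .t_or1 _ A B (hs h) (hs h') (ih (Set.insert_subset_insert hs))
  | t_or2 S A B h h' hc ih =>
      exact .t_or2 _ A B (hs h) (hs h') (ih (Set.insert_subset_insert hs))
  | f_or S A B h hc ih =>
      exact .f_or _ A B (hs h) (ih (Set.insert_subset_insert (Set.insert_subset_insert hs)))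
  | f_neg S A h hc ih =>
      exact .f_neg _ A (hs h) (ih (Set.insert_subset_insert hs))
  | t_negneg S A h hc ih =>
      exact .t_negneg _ A (hs h) (ih (Set.insert_subset_insert hs))
  | t_neg S A h h' hc ih =>
      exact .t_neg _ A (hs h) (hs h') (ih (Set.insert_subset_insert hs))
  | f_cons_and1 S A B h h' hc ih =>
      exact .f_cons_and1 _ A B (hs h) (hs h') (ih (Set.insert_subset_insert hs))
  | f_cons_and2 S A B h h' hc ih =>
      exact .f_cons_and2 _ A B (hs h) (hs h') (ih (Set.insert_subset_insert hs))
  | f_cons_or1 S A B h h' hc ih =>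
      exact .f_cons_or1 _ A B (hs h) (hs h') (ih (Set.insert_subset_insert hs))
  | f_cons_or2 S A B h h' hc ih =>
      exact .f_cons_or2 _ A B (hs h) (hs h') (ih (Set.insert_subset_insert hs))
  | f_cons_imp1 S A B h h' hc ih =>
      exact .f_cons_imp1 _ A B (hs h) (hs h') (ih (Set.insert_subset_insert hs))
  | f_cons_imp2 S A B h h' hc ih =>
      exact .f_cons_imp2 _ A B (hs h) (hs h') (ih (Set.insert_subset_insert hs))
  | pb S A h1 h2 ih1 ih2 =>
      exact .pb _ A (ih1 (Set.insert_subset_insert hs)) (ih2 (Set.insert_subset_insert hs))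

namespace KECompl

open Classical in
/-- The increasing chain of open branches obtained by trying to add each
signed formula in turn, keeping the branch open. -/
noncomputable def C (e : ℕ → SignedFormula) (S0 : Set SignedFormula) : ℕ → Set SignedFormula
  | 0 => S0
  | n+1 => if KEClosed (insert (e n) (C e S0 n)) then C e S0 n else insert (e n) (C e S0 n)

variable (e : ℕ → SignedFormula) (S0 : Set SignedFormula)

theorem C_mono : Monotone (C e S0) := by
  apply monotone_nat_of_le_succ
  intro n
  show C e S0 n ⊆ C e S0 (n+1)
  simp only [C]
  split
  · exact subset_rfl
  · exact Set.subset_insert _ _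

theorem C_con (h0 : ¬ KEClosed S0) : ∀ n, ¬ KEClosed (C e S0 n) := by
  intro n
  induction n with
  | zero => exact h0
  | succ n ih =>
      simp only [C]
      split
      · exact ih
      · next hk => exact hk

/-- The limit branch. -/
def U : Set SignedFormula := ⋃ n, C e S0 n

theorem mem_U {sf : SignedFormula} : sf ∈ U e S0 ↔ ∃ n, sf ∈ C e S0 n := Set.mem_iUnion

theorem rej (he : Function.Surjective e) {sf : SignedFormula} (hsf : sf ∉ U e S0) :
    ∃ k, KEClosed (insert sf (C e S0 k)) := by
  obtain ⟨k, rfl⟩ := he sf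
  refine ⟨k, ?_⟩
  by_contra hkc
  apply hsf
  refine (mem_U e S0).2 ⟨k+1, ?_⟩
  simp only [C]
  rw [if_neg hkc]
  exact Set.mem_insert _ _

variable (h0 : ¬ KEClosed S0) (he : Function.Surjective e)
include h0 he

theorem U_complete : ∀ A : C1Formula, .T A ∈ U e S0 ∨ .F A ∈ U e S0 := by
  intro A
  by_contra hc
  push_neg at hc
  obtain ⟨k1, h1⟩ := rej e S0 he hc.1
  obtain ⟨k2, h2⟩ := rej e S0 he hc.2
  refine C_con e S0 h0 (max k1 k2) (.pb _ A ?_ ?_)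
  · exact h1.mono (Set.insert_subset_insert (C_mono e S0 (le_max_left _ _)))
  · exact h2.mono (Set.insert_subset_insert (C_mono e S0 (le_max_right _ _)))

theorem U_noconj : ∀ A : C1Formula, ¬(.T A ∈ U e S0 ∧ .F A ∈ U e S0) := by
  rintro A ⟨h1, h2⟩
  obtain ⟨k1, h1⟩ := (mem_U e S0).1 h1
  obtain ⟨k2, h2⟩ := (mem_U e S0).1 h2
  refine C_con e S0 h0 (max k1 k2) (.close _ A ?_ ?_)
  · exact C_mono e S0 (le_max_left _ _) h1
  · exact C_mono e S0 (le_max_right _ _) h2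

theorem U_rule1 {p c : SignedFormula}
    (hr : ∀ S : Set SignedFormula, p ∈ S → KEClosed (insert c S) → KEClosed S)
    (hp : p ∈ U e S0) : c ∈ U e S0 := by
  by_contra hc
  obtain ⟨k1, h1⟩ := rej e S0 he hc
  obtain ⟨k2, h2⟩ := (mem_U e S0).1 hp
  refine C_con e S0 h0 (max k1 k2) ?_
  refine hr _ (C_mono e S0 (le_max_right _ _) h2) ?_
  exact h1.mono (Set.insert_subset_insert (C_mono e S0 (le_max_left _ _)))

theorem U_rule2 {p q c : SignedFormula}
    (hr : ∀ S : Set SignedFormula, p ∈ S → q ∈ S → KEClosed (insert c S) → KEClosed S)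
    (hp : p ∈ U e S0) (hq : q ∈ U e S0) : c ∈ U e S0 := by
  by_contra hc
  obtain ⟨k1, h1⟩ := rej e S0 he hc
  obtain ⟨k2, h2⟩ := (mem_U e S0).1 hp
  obtain ⟨k3, h3⟩ := (mem_U e S0).1 hq
  refine C_con e S0 h0 (max k1 (max k2 k3)) ?_
  refine hr _ (C_mono e S0 (le_trans (le_max_left _ _) (le_max_right _ _)) h2)
    (C_mono e S0 (le_trans (le_max_right _ _) (le_max_right _ _)) h3) ?_
  exact h1.mono (Set.insert_subset_insert (C_mono e S0 (le_max_left _ _)))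

end KECompl

theorem sat_of_not_closed (S0 : Set SignedFormula) (h0 : ¬ KEClosed S0) : SatSet S0 := by
  classical
  obtain ⟨e, he⟩ := exists_surjective_nat SignedFormula
  set Uu : Set SignedFormula := KECompl.U e S0 with hUu
  have hS0U : S0 ⊆ Uu := fun sf hsf => Set.mem_iUnion.2 ⟨0, hsf⟩
  have complete := KECompl.U_complete e S0 h0 he
  have noconj := KECompl.U_noconj e S0 h0 he
  have rule1 := fun {p c : SignedFormula} => KECompl.U_rule1 e S0 h0 he (p := p) (c := c)
  have rule2 := fun {p q c : SignedFormula} => KECompl.U_rule2 e S0 h0 he (p := p) (q := q) (c := c)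
  have hTF : ∀ A : C1Formula, .T A ∉ Uu ↔ .F A ∈ Uu := by
    intro A
    constructor
    · intro h; rcases complete A with h' | h'
      · exact absurd h' h
      · exact h'
    · intro h h'; exact noconj A ⟨h', h⟩
  have hFT : ∀ A : C1Formula, .F A ∉ Uu → .T A ∈ Uu := by
    intro A h
    by_contra h'
    exact h ((hTF A).1 h')
  set v : C1Formula → Fin 2 := fun A => if SignedFormula.T A ∈ Uu then 1 else 0 with hv
  have v1 : ∀ A : C1Formula, v A = 1 ↔ .T A ∈ Uu := by
    intro A; by_cases h : SignedFormula.T A ∈ Uu <;> simp [hv, h]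
  have v0 : ∀ A : C1Formula, v A = 0 ↔ .F A ∈ Uu := by
    intro A; rw [← hTF]; by_cases h : SignedFormula.T A ∈ Uu <;> simp [hv, h]
  refine ⟨⟨v, ?_, ?_, ?_, ?_, ?_, ?_, ?_, ?_, ?_⟩, ?_⟩
  · -- and_iff
    intro A B
    rw [v1, v1, v1]
    constructor
    · intro hAB
      constructor
      · exact rule1 (fun S hp hc => KEClosed.t_and S A B hp
          (hc.mono (Set.insert_subset_insert (Set.subset_insert _ _)))) hAB
      · exact rule1 (fun S hp hc => KEClosed.t_and S A B hp
          (hc.mono (Set.subset_insert _ _))) hAB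
    · rintro ⟨hA, hB⟩
      by_contra hAB
      rw [hTF] at hAB
      exact noconj B ⟨hB, rule2 (fun S h1 h2 hc => KEClosed.f_and1 S A B h1 h2 hc) hAB hA⟩
  · -- or_iff
    intro A B
    rw [v1, v1, v1]
    constructor
    · intro hAB
      rcases complete A with hA | hA
      · exact Or.inl hA
      · exact Or.inr (rule2 (fun S h1 h2 hc => KEClosed.t_or1 S A B h1 h2 hc) hAB hA)
    · rintro (hA | hB) <;> by_contra hAB <;> rw [hTF] at hAB
      · exact noconj A ⟨hA, rule1 (fun S hp hc => KEClosed.f_or S A B hp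
          (hc.mono (Set.insert_subset_insert (Set.subset_insert _ _)))) hAB⟩
      · exact noconj B ⟨hB, rule1 (fun S hp hc => KEClosed.f_or S A B hp
          (hc.mono (Set.subset_insert _ _))) hAB⟩
  · -- imp_iff
    intro A B
    rw [v1, v0, v1]
    constructor
    · intro hAB
      rcases complete A with hA | hA
      · exact Or.inr (rule2 (fun S h1 h2 hc => KEClosed.t_imp1 S A B h1 h2 hc) hAB hA)
      · exact Or.inl hA
    · rintro (hA | hB) <;> by_contra hAB <;> rw [hTF] at hAB
      · exact noconj A ⟨rule1 (fun S hp hc => KEClosed.f_imp S A B hp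
          (hc.mono (Set.insert_subset_insert (Set.subset_insert _ _)))) hAB, hA⟩
      · exact noconj B ⟨hB, rule1 (fun S hp hc => KEClosed.f_imp S A B hp
          (hc.mono (Set.subset_insert _ _))) hAB⟩
  · -- neg_val
    intro A hA
    rw [v0] at hA
    rw [v1]
    exact rule1 (fun S hp hc => KEClosed.f_neg S A hp hc) hA
  · -- negneg_val
    intro A hA
    rw [v1] at hA
    rw [v1]
    exact rule1 (fun S hp hc => KEClosed.t_negneg S A hp hc) hA
  · -- cons_val
    intro A hA
    rw [v1] at hA
    rw [v0, v0]
    by_contra hc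
    push_neg at hc
    exact hc.1 (rule2 (fun S h1 h2 hc' => KEClosed.t_neg S A h1 h2 hc')
      (hFT _ hc.2) hA)
  · -- cons_and
    intro A B hAB
    rw [v0] at hAB
    rw [v0, v0]
    by_contra hc
    push_neg at hc
    exact hc.2 (rule2 (fun S h1 h2 hc' => KEClosed.f_cons_and1 S A B h1 h2 hc')
      hAB (hFT _ hc.1))
  · -- cons_or
    intro A B hAB
    rw [v0] at hAB
    rw [v0, v0]
    by_contra hc
    push_neg at hc
    exact hc.2 (rule2 (fun S h1 h2 hc' => KEClosed.f_cons_or1 S A B h1 h2 hc')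
      hAB (hFT _ hc.1))
  · -- cons_imp
    intro A B hAB
    rw [v0] at hAB
    rw [v0, v0]
    by_contra hc
    push_neg at hc
    exact hc.2 (rule2 (fun S h1 h2 hc' => KEClosed.f_cons_imp1 S A B h1 h2 hc')
      hAB (hFT _ hc.1))
  · -- sv
    intro sf hsf
    have hm : sf ∈ Uu := hS0U hsf
    cases sf with
    | T A => show v A = 1; exact (v1 A).2 hm
    | F A =>
        show 1 - v A = 1
        rw [(v0 A).2 hm]
        decide

/-- Completeness of the C1 KE system: if Γ ⊨_{C1} B, then there is a closed
C1 KE tableau for the sequent Γ ⊢ B. -/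
theorem c1_KE_completeness (Γ : Set C1Formula) (B : C1Formula)
    (h : C1Valid Γ B) : KEProvable Γ B := by
  by_contra hnc
  obtain ⟨w, hw⟩ := sat_of_not_closed _ hnc
  have hΓ : ∀ A ∈ Γ, w.v A = 1 := by
    intro A hA
    exact hw (.T A) (Or.inl ⟨A, hA, rfl⟩)
  have hB : w.v B = 1 := h w hΓ
  have hFB : w.sv (.F B) = 1 := hw (.F B) (Or.inr rfl)
  simp only [C1Valuation.sv, hB] at hFB
  exact absurd hFB (by decide)
end

section
/- (Medical example, Case 4) Let K, L, M, N, O be distinct propositional atoms and let F1 = K → ¬L, F2 = L → ¬K, F3 = K → M, F4 = N → K, F5 = O → L. Then {F1, F2, F3, F4, F5, N, O} ⊨_{C1} K ∧ ¬∘K, where ∘K abbreviates ¬(K ∧ ¬K); i.e., every C1-valuation assigning 1 to F1, F2, F3, F4, F5, N and O assigns 1 to K ∧ ¬∘K. -/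
/-- Medical example, Case 4: with F1 = K → ¬L, F2 = L → ¬K, F3 = K → M,
F4 = N → K, F5 = O → L for distinct atoms K, L, M, N, O, we have
{F1, F2, F3, F4, F5, N, O} ⊨_{C1} K ∧ ¬∘K, where ∘K = ¬(K ∧ ¬K). -/
theorem medical_case4 (k l m n o : ℕ) (hdist : [k, l, m, n, o].Pairwise (· ≠ ·))
    (w : C1Valuation)
    (hF1 : w.v ((C1Formula.atom k).imp (C1Formula.atom l).neg) = 1)
    (hF2 : w.v ((C1Formula.atom l).imp (C1Formula.atom k).neg) = 1)
    (hF3 : w.v ((C1Formula.atom k).imp (C1Formula.atom m)) = 1)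
    (hF4 : w.v ((C1Formula.atom n).imp (C1Formula.atom k)) = 1)
    (hF5 : w.v ((C1Formula.atom o).imp (C1Formula.atom l)) = 1)
    (hN : w.v (C1Formula.atom n) = 1)
    (hO : w.v (C1Formula.atom o) = 1) :
    w.v ((C1Formula.atom k).and ((C1Formula.atom k).cons.neg)) = 1 := by
  have fin2 : ∀ x : Fin 2, x = 0 ∨ x = 1 := by decide
  have hK : w.v (C1Formula.atom k) = 1 := by
    rcases (w.imp_iff _ _).1 hF4 with h | h
    · rw [h] at hN; exact absurd hN (by decide)
    · exact h
  have hL : w.v (C1Formula.atom l) = 1 := by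
    rcases (w.imp_iff _ _).1 hF5 with h | h
    · rw [h] at hO; exact absurd hO (by decide)
    · exact h
  have hnK : w.v (C1Formula.atom k).neg = 1 := by
    rcases (w.imp_iff _ _).1 hF2 with h | h
    · rw [h] at hL; exact absurd hL (by decide)
    · exact h
  have hcons : w.v (C1Formula.atom k).cons ≠ 1 := by
    intro h
    rcases w.cons_val _ h with h' | h' <;> simp_all
  have hcnegK : w.v (C1Formula.atom k).cons.neg = 1 := by
    rcases fin2 (w.v (C1Formula.atom k).cons.neg) with h | h
    · exact absurd (w.neg_val _ h) hcons
    · exact h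
  exact (w.and_iff _ _).2 ⟨hK, hcnegK⟩
end

section
/- (Validity of the fifth problem family Φ⁵) For every n ≥ 1, if A₁, …, A_{n+1}, B₁, …, B_n are pairwise distinct propositional atoms, then the sequent with premises ∘A₁; ⋀_{i=1}^n A_i; ⋀_{i=1}^n [A_{n+1} → ((A_i ∨ B_i) → ∘A_{i+1})]; and (⋀_{i=1}^n ∘A_i) → ¬A_{n+1}, and conclusion ¬¬¬A_{n+1}, is C1-valid: every C1-valuation assigning 1 to all four premises assigns 1 to ¬¬¬A_{n+1}. Here ∘C abbreviates ¬(C ∧ ¬C). -/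
/-- Iterated conjunction ⋀_{i=1}^n f(i) (left-associated, meaningful for n ≥ 1). -/
def iterAnd (f : ℕ → C1Formula) : ℕ → C1Formula
  | 0 => f 0
  | 1 => f 1
  | n + 2 => (iterAnd f (n + 1)).and (f (n + 2))

/-- Iterated disjunction ⋁_{i=1}^n f(i) (left-associated, meaningful for n ≥ 1). -/
def iterOr (f : ℕ → C1Formula) : ℕ → C1Formula
  | 0 => f 0
  | 1 => f 1
  | n + 2 => (iterOr f (n + 1)).or (f (n + 2))


lemma iterAnd_iff (w : C1Valuation) (f : ℕ → C1Formula) :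
    ∀ n : ℕ, 1 ≤ n →
      (w.v (iterAnd f n) = 1 ↔ ∀ i : ℕ, 1 ≤ i → i ≤ n → w.v (f i) = 1) := by
  intro n
  induction n with
  | zero => omega
  | succ m ih =>
    intro _
    match m with
    | 0 =>
      show w.v (f 1) = 1 ↔ _
      constructor
      · intro h i h1 h2
        have : i = 1 := by omega
        subst this; exact h
      · intro h; exact h 1 le_rfl le_rfl
    | k + 1 =>
      show w.v ((iterAnd f (k+1)).and (f (k+2))) = 1 ↔ _
      rw [w.and_iff, ih (by omega)]
      constructor
      · rintro ⟨h1, h2⟩ i hi1 hi2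
        rcases Nat.lt_or_ge i (k+2) with h | h
        · exact h1 i hi1 (by omega)
        · have : i = k + 2 := by omega
          subst this; exact h2
      · intro h
        exact ⟨fun i hi1 hi2 => h i hi1 (by omega), h (k+2) (by omega) le_rfl⟩

lemma fin2_ne_one {x : Fin 2} (h : x ≠ 1) : x = 0 := by omega
/-- Validity of the fifth problem family Φ⁵: for every n ≥ 1 and pairwise
distinct atoms A₁, …, A_{n+1}, B₁, …, B_n, the sequent
∘A₁, ⋀_{i=1}^n A_i, ⋀_{i=1}^n [A_{n+1} → ((A_i ∨ B_i) → ∘A_{i+1})],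
(⋀_{i=1}^n ∘A_i) → ¬A_{n+1} ⊢ ¬¬¬A_{n+1} is C1-valid. -/
theorem fifth_family_valid (n : ℕ) (hn : 1 ≤ n) (A B : ℕ → ℕ)
    (hA : ∀ i ∈ Finset.Icc 1 (n + 1), ∀ j ∈ Finset.Icc 1 (n + 1), i ≠ j → A i ≠ A j)
    (hB : ∀ i ∈ Finset.Icc 1 n, ∀ j ∈ Finset.Icc 1 n, i ≠ j → B i ≠ B j)
    (hAB : ∀ i ∈ Finset.Icc 1 (n + 1), ∀ j ∈ Finset.Icc 1 n, A i ≠ B j)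
    (w : C1Valuation)
    (hP1 : w.v ((C1Formula.atom (A 1)).cons) = 1)
    (hP2 : w.v (iterAnd (fun i => C1Formula.atom (A i)) n) = 1)
    (hP3 : w.v (iterAnd (fun i =>
        (C1Formula.atom (A (n + 1))).imp
          (((C1Formula.atom (A i)).or (C1Formula.atom (B i))).imp
            ((C1Formula.atom (A (i + 1))).cons))) n) = 1)
    (hP4 : w.v ((iterAnd (fun i => (C1Formula.atom (A i)).cons) n).imp
        ((C1Formula.atom (A (n + 1))).neg)) = 1) :
    w.v (((C1Formula.atom (A (n + 1))).neg.neg.neg)) = 1 := by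
  by_contra hcon
  have h0 : w.v (((C1Formula.atom (A (n + 1))).neg.neg.neg)) = 0 := fin2_ne_one hcon
  have hnn : w.v ((C1Formula.atom (A (n + 1))).neg.neg) = 1 := w.neg_val _ h0
  have hAn1 : w.v (C1Formula.atom (A (n + 1))) = 1 := w.negneg_val _ hnn
  have hAtoms : ∀ i : ℕ, 1 ≤ i → i ≤ n → w.v (C1Formula.atom (A i)) = 1 :=
    (iterAnd_iff w _ n hn).mp hP2
  have hImps := (iterAnd_iff w _ n hn).mp hP3
  have hConsSucc : ∀ i : ℕ, 1 ≤ i → i ≤ n →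
      w.v ((C1Formula.atom (A (i + 1))).cons) = 1 := by
    intro i h1 h2
    have h := (w.imp_iff _ _).mp (hImps i h1 h2)
    rcases h with h | h
    · rw [hAn1] at h; exact absurd h (by decide)
    have h' := (w.imp_iff _ _).mp h
    rcases h' with h' | h'
    · have hor : w.v ((C1Formula.atom (A i)).or (C1Formula.atom (B i))) = 1 :=
        (w.or_iff _ _).mpr (Or.inl (hAtoms i h1 h2))
      rw [hor] at h'; exact absurd h' (by decide)
    · exact h'
  have hConsAll : ∀ i : ℕ, 1 ≤ i → i ≤ n + 1 →
      w.v ((C1Formula.atom (A i)).cons) = 1 := by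
    intro i h1 h2
    match i, h1 with
    | 1, _ => exact hP1
    | (j+2), _ => exact hConsSucc (j+1) (by omega) (by omega)
  have hIter : w.v (iterAnd (fun i => (C1Formula.atom (A i)).cons) n) = 1 :=
    (iterAnd_iff w _ n hn).mpr (fun i h1 h2 => hConsAll i h1 (by omega))
  have hNeg : w.v ((C1Formula.atom (A (n + 1))).neg) = 1 := by
    rcases (w.imp_iff _ _).mp hP4 with h | h
    · rw [hIter] at h; exact absurd h (by decide)
    · exact h
  rcases w.cons_val _ (hConsAll (n+1) (by omega) le_rfl) with h | h
  · rw [hAn1] at h; exact absurd h (by decide)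
  · rw [hNeg] at h; exact absurd h (by decide)
end

section
/- (Validity of the sixth problem family Φ⁶) For every n ≥ 1, if A₁, …, A_{n+1}, B₁, …, B_n, C₁, …, C_n, D are pairwise distinct propositional atoms, then the sequent with premises ⋀_{i=1}^n B_i; ⋀_{i=1}^n ∘C_i; ⋀_{i=1}^n [(A_i ∨ B_i) → ∘A_{i+1}]; and (⋀_{i=1}^n C_i) → (D ∧ ¬C₁), and conclusion [⋁_{i=1}^n ∘(A_{i+1} → C_i)] ∨ D, is C1-valid: every C1-valuation assigning 1 to all four premises assigns 1 to the conclusion. Here ∘E abbreviates ¬(E ∧ ¬E). -/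
lemma iterAnd_val (w : C1Valuation) (f : ℕ → C1Formula) :
    ∀ n, 1 ≤ n → w.v (iterAnd f n) = 1 → ∀ i ∈ Finset.Icc 1 n, w.v (f i) = 1 := by
  intro n
  induction n with
  | zero => omega
  | succ m ih =>
    intro _ h i hi
    match m, h, hi with
    | 0, h, hi =>
      simp only [Finset.mem_Icc] at hi
      have : i = 1 := by omega
      subst this; exact h
    | (k+1), h, hi =>
      rw [iterAnd, w.and_iff] at h
      simp only [Finset.mem_Icc] at hi
      rcases Nat.lt_or_ge i (k+2) with h1 | h1
      · exact ih (by omega) h.1 i (Finset.mem_Icc.mpr ⟨hi.1, by omega⟩)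
      · have : i = k + 2 := by omega
        subst this; exact h.2

lemma iterOr_val (w : C1Valuation) (f : ℕ → C1Formula) :
    ∀ n, ∀ j ∈ Finset.Icc 1 n, w.v (f j) = 1 → w.v (iterOr f n) = 1 := by
  intro n
  induction n with
  | zero => simp
  | succ m ih =>
    intro j hj h
    simp only [Finset.mem_Icc] at hj
    match m with
    | 0 =>
      have : j = 1 := by omega
      subst this; exact h
    | (k+1) =>
      rw [iterOr, w.or_iff]
      rcases Nat.lt_or_ge j (k+2) with h1 | h1
      · exact Or.inl (ih j (Finset.mem_Icc.mpr ⟨hj.1, by omega⟩) h)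
      · have : j = k + 2 := by omega
        subst this; exact Or.inr h

/-- Validity of the sixth problem family Φ⁶: for every n ≥ 1 and pairwise
distinct atoms A₁, …, A_{n+1}, B₁, …, B_n, C₁, …, C_n, D, the sequent
⋀_{i=1}^n B_i, ⋀_{i=1}^n ∘C_i, ⋀_{i=1}^n [(A_i ∨ B_i) → ∘A_{i+1}],
(⋀_{i=1}^n C_i) → (D ∧ ¬C₁) ⊢ [⋁_{i=1}^n ∘(A_{i+1} → C_i)] ∨ D is C1-valid. -/
theorem sixth_family_valid (n : ℕ) (hn : 1 ≤ n) (A B C : ℕ → ℕ) (D : ℕ)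
    (hA : ∀ i ∈ Finset.Icc 1 (n + 1), ∀ j ∈ Finset.Icc 1 (n + 1), i ≠ j → A i ≠ A j)
    (hB : ∀ i ∈ Finset.Icc 1 n, ∀ j ∈ Finset.Icc 1 n, i ≠ j → B i ≠ B j)
    (hC : ∀ i ∈ Finset.Icc 1 n, ∀ j ∈ Finset.Icc 1 n, i ≠ j → C i ≠ C j)
    (hAB : ∀ i ∈ Finset.Icc 1 (n + 1), ∀ j ∈ Finset.Icc 1 n, A i ≠ B j)
    (hAC : ∀ i ∈ Finset.Icc 1 (n + 1), ∀ j ∈ Finset.Icc 1 n, A i ≠ C j)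
    (hBC : ∀ i ∈ Finset.Icc 1 n, ∀ j ∈ Finset.Icc 1 n, B i ≠ C j)
    (hAD : ∀ i ∈ Finset.Icc 1 (n + 1), A i ≠ D)
    (hBD : ∀ i ∈ Finset.Icc 1 n, B i ≠ D)
    (hCD : ∀ i ∈ Finset.Icc 1 n, C i ≠ D)
    (w : C1Valuation)
    (hP1 : w.v (iterAnd (fun i => C1Formula.atom (B i)) n) = 1)
    (hP2 : w.v (iterAnd (fun i => (C1Formula.atom (C i)).cons) n) = 1)
    (hP3 : w.v (iterAnd (fun i =>
        ((C1Formula.atom (A i)).or (C1Formula.atom (B i))).imp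
          ((C1Formula.atom (A (i + 1))).cons)) n) = 1)
    (hP4 : w.v ((iterAnd (fun i => C1Formula.atom (C i)) n).imp
        ((C1Formula.atom D).and ((C1Formula.atom (C 1)).neg))) = 1) :
    w.v ((iterOr (fun i =>
        ((C1Formula.atom (A (i + 1))).imp (C1Formula.atom (C i))).cons) n).or
        (C1Formula.atom D)) = 1 := by
  -- ∘A_{2} = 1 and ∘C_1 = 1, hence ∘(A_2 → C_1) = 1
  have h1 : (1 : ℕ) ∈ Finset.Icc 1 n := Finset.mem_Icc.mpr ⟨le_refl 1, hn⟩
  have hB1 : w.v (C1Formula.atom (B 1)) = 1 :=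
    iterAnd_val w _ n hn hP1 1 h1
  have hC1 : w.v ((C1Formula.atom (C 1)).cons) = 1 :=
    iterAnd_val w _ n hn hP2 1 h1
  have hP3' := iterAnd_val w _ n hn hP3 1 h1
  rw [w.imp_iff] at hP3'
  have horB : w.v ((C1Formula.atom (A 1)).or (C1Formula.atom (B 1))) = 1 :=
    (w.or_iff _ _).mpr (Or.inr hB1)
  have hA2 : w.v ((C1Formula.atom (A 2)).cons) = 1 := by
    rcases hP3' with h | h
    · rw [horB] at h; exact absurd h (by decide)
    · exact h
  have hkey : w.v (((C1Formula.atom (A 2)).imp (C1Formula.atom (C 1))).cons) = 1 := by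
    by_contra hne
    have h0 : w.v (((C1Formula.atom (A 2)).imp (C1Formula.atom (C 1))).cons) = 0 := by
      omega
    rcases w.cons_imp _ _ h0 with h | h
    · rw [hA2] at h; exact absurd h (by decide)
    · rw [hC1] at h; exact absurd h (by decide)
  rw [w.or_iff]
  exact Or.inl (iterOr_val w _ n 1 h1 hkey)
end
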